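/- arXiv:1404.6032 — 5 statements merged into one kernel-verified Lean document; each statement's English description precedes it below -/
import Mathlib

section
/- Let d = k+1 with k ≥ 1, and let p_1,…,p_k be free polynomials in d variables. Suppose X_0 ∈ M_n and Y_0 = (Y_0^1,…,Y_0^k) ∈ M_n^k satisfy p_j(X_0, Y_0^1,…,Y_0^k) = 0 for all j, and suppose that the linear map M_n^k → M_n^k sending h = (h^1,…,h^k) to (Dp_j(X_0,Y_0)[(0, h^1,…,h^k)])_{j=1}^k is bijective. Then every Y_0^j commutes with X_0. -/
open Matrix Filter Topology
open scoped Matrix.Norms.L2Operator Kronecker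

noncomputable section

/-- `n × n` complex matrices, with the `L²` operator norm. -/
abbrev Mat (n : ℕ) : Type := Matrix (Fin n) (Fin n) ℂ

/-- `d`-tuples of `n × n` complex matrices, normed by the max of the operator norms. -/
abbrev MatTup (d n : ℕ) : Type := Fin d → Mat n

/-- `M^d`, the disjoint union over all `n` of the `d`-tuples of `n × n` matrices. -/
abbrev MSpace (d : ℕ) : Type := Σ n : ℕ, MatTup d n

/-- Free (noncommutative) polynomials in `d` variables over `ℂ`. -/
abbrev FreePoly (d : ℕ) : Type := FreeAlgebra ℂ (Fin d)

/-- Evaluation of a free polynomial at a `d`-tuple of matrices. -/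
def polyEval {d n : ℕ} (p : FreePoly d) (x : MatTup d n) : Mat n :=
  FreeAlgebra.lift ℂ (fun i => x i) p

/-- The (Fréchet) derivative of the evaluation of a free polynomial, `Dp(a)[h]`. -/
def polyDeriv {d n : ℕ} (p : FreePoly d) (a h : MatTup d n) : Mat n :=
  fderiv ℂ (fun x : MatTup d n => polyEval p x) a h

/-- Assemble a `2 × 2` block matrix.  -/
def blk {n m : ℕ} (A : Matrix (Fin n) (Fin n) ℂ) (B : Matrix (Fin n) (Fin m) ℂ)
    (C : Matrix (Fin m) (Fin n) ℂ) (D : Matrix (Fin m) (Fin m) ℂ) : Mat (n + m) :=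
  Matrix.reindex finSumFinEquiv finSumFinEquiv (Matrix.fromBlocks A B C D)

/-- Coordinatewise direct sum of tuples of matrices. -/
def dSum {d n m : ℕ} (x : MatTup d n) (y : MatTup d m) : MatTup d (n + m) :=
  fun r => blk (x r) 0 0 (y r)

/-- Coordinatewise conjugation `s⁻¹ x s`. -/
def simConj {d n : ℕ} (s : Mat n) (x : MatTup d n) : MatTup d n :=
  fun r => s⁻¹ * x r * s

/-- An nc domain: a d.u. open subset of `M^d` closed under direct sums and unitary
conjugations. -/
structure IsNCDomain {d : ℕ} (Ω : Set (MSpace d)) : Prop where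
  duOpen : ∀ n : ℕ, IsOpen {x : MatTup d n | (⟨n, x⟩ : MSpace d) ∈ Ω}
  dsum_mem : ∀ {n m : ℕ} (x : MatTup d n) (y : MatTup d m),
    (⟨n, x⟩ : MSpace d) ∈ Ω → (⟨m, y⟩ : MSpace d) ∈ Ω →
    (⟨n + m, dSum x y⟩ : MSpace d) ∈ Ω
  unitary_mem : ∀ {n : ℕ} (u : Matrix.unitaryGroup (Fin n) ℂ) (x : MatTup d n),
    (⟨n, x⟩ : MSpace d) ∈ Ω → (⟨n, simConj (u : Mat n) x⟩ : MSpace d) ∈ Ω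

/-- A d.u. open subset of `M^d`: each slice is open. -/
def DUOpen {d : ℕ} (U : Set (MSpace d)) : Prop :=
  ∀ n : ℕ, IsOpen {x : MatTup d n | (⟨n, x⟩ : MSpace d) ∈ U}

/-- An nc function on `Ω`: a graded function respecting direct sums and similarities. -/
structure IsNCFunctionOn {d : ℕ} (Ω : Set (MSpace d)) (f : ∀ n, MatTup d n → Mat n) : Prop where
  dsum_eq : ∀ {n m : ℕ} (x : MatTup d n) (y : MatTup d m),
    (⟨n, x⟩ : MSpace d) ∈ Ω → (⟨m, y⟩ : MSpace d) ∈ Ω →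
    (⟨n + m, dSum x y⟩ : MSpace d) ∈ Ω →
    f (n + m) (dSum x y) = blk (f n x) 0 0 (f m y)
  sim_eq : ∀ {n : ℕ} (s : Mat n) (x : MatTup d n), IsUnit s →
    (⟨n, x⟩ : MSpace d) ∈ Ω → (⟨n, simConj s x⟩ : MSpace d) ∈ Ω →
    f n (simConj s x) = s⁻¹ * f n x * s

/-- A fine open set: a union of nc domains. -/
def FineOpen {d : ℕ} (U : Set (MSpace d)) : Prop :=
  ∀ x ∈ U, ∃ Ω : Set (MSpace d), IsNCDomain Ω ∧ x ∈ Ω ∧ Ω ⊆ U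

/-- A fine holomorphic function: an nc function on a fine open set, locally bounded in
the fine topology. -/
def IsFineHolo {d : ℕ} (U : Set (MSpace d)) (f : ∀ n, MatTup d n → Mat n) : Prop :=
  FineOpen U ∧ IsNCFunctionOn U f ∧
    ∀ a ∈ U, ∃ Ω : Set (MSpace d), IsNCDomain Ω ∧ a ∈ Ω ∧ Ω ⊆ U ∧
      ∃ C : ℝ, ∀ x ∈ Ω, ‖f x.1 x.2‖ ≤ C

/-- `a^{(k)}`, the direct sum of `k` copies of `a`. -/
def ampTup {d n : ℕ} (k : ℕ) (a : MatTup d n) : MatTup d (k * n) :=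
  fun r => Matrix.reindex finProdFinEquiv finProdFinEquiv
    ((1 : Matrix (Fin k) (Fin k) ℂ) ⊗ₖ a r)

/-- The basic fat neighborhood `F(a,r)`: all unitary conjugates of points within `r`
of some `a^{(k)}`. -/
def FBall {d : ℕ} (a : MSpace d) (r : ℝ) : Set (MSpace d) :=
  {y | ∃ k : ℕ, 1 ≤ k ∧ ∃ x : MatTup d (k * a.1), ‖x - ampTup k a.2‖ < r ∧
    ∃ u : Matrix.unitaryGroup (Fin (k * a.1)) ℂ,
      y = ⟨k * a.1, simConj (u : Mat (k * a.1)) x⟩}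

/-- A fat open set. -/
def FatOpen {d : ℕ} (U : Set (MSpace d)) : Prop :=
  ∀ y ∈ U, ∃ ε : ℝ, 0 < ε ∧ FBall y ε ⊆ U

/-- A fat holomorphic function: an nc function on a fat open set, locally bounded in the
fat topology. -/
def IsFatHolo {d : ℕ} (U : Set (MSpace d)) (f : ∀ n, MatTup d n → Mat n) : Prop :=
  FatOpen U ∧ IsNCFunctionOn U f ∧
    ∀ a ∈ U, ∃ ε : ℝ, 0 < ε ∧ FBall a ε ⊆ U ∧
      ∃ C : ℝ, ∀ x ∈ FBall a ε, ‖f x.1 x.2‖ ≤ C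

/-- The Hessian `Hf(a)[h,k]`: the derivative in direction `k` of `x ↦ Df(x)[h]`. -/
def ncHess {d n : ℕ} (f : ∀ m, MatTup d m → Mat m) (a h k : MatTup d n) : Mat n :=
  fderiv ℂ (fun x : MatTup d n => fderiv ℂ (f n) x h) a k

/-- Join a `(d-k)`-tuple and a `k`-tuple into a `d`-tuple. -/
def joinTup {d k : ℕ} (hk : k ≤ d) {n : ℕ} (y : Fin (d - k) → Mat n) (z : Fin k → Mat n) :
    Fin d → Mat n :=
  fun j => if hj : (j : ℕ) < d - k then y ⟨j, hj⟩
    else z ⟨(j : ℕ) - (d - k), by have := j.isLt; omega⟩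

/-- A tuple `a` is broad if every matrix is a polynomial in `a`. -/
def Broad {d n : ℕ} (a : MatTup d n) : Prop :=
  ∀ M : Mat n, ∃ p : FreePoly d, polyEval p a = M

/-- The ampliation `id_k ⊗ L` of a map `L : M_n^d → M_n`, acting blockwise on
`M_{kn}^d` (identifying `M_{kn}` with `k × k` block matrices over `M_n`). -/
def ampFun {d n : ℕ} (L : MatTup d n → Mat n) (k : ℕ) (H : MatTup d (k * n)) : Mat (k * n) :=
  fun p q =>
    L (fun r s t => H r (finProdFinEquiv ((finProdFinEquiv.symm p).1, s))
        (finProdFinEquiv ((finProdFinEquiv.symm q).1, t)))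
      (finProdFinEquiv.symm p).2 (finProdFinEquiv.symm q).2

/-- The set of operator norms of right inverses of the ampliation `L_k`. -/
def RightInvVals {d n : ℕ} (L : MatTup d n → Mat n) (k : ℕ) : Set ℝ :=
  {c | ∃ S : Mat (k * n) →L[ℂ] MatTup d (k * n), (∀ Y, ampFun L k (S Y) = Y) ∧ ‖S‖ = c}

/-- `L` is completely nonsingular: every ampliation has a right inverse, and
`sup_k inf {‖R‖ : R right inverse of L_k} < ∞`. -/
def CompletelyNonsingular {d n : ℕ} (L : MatTup d n → Mat n) : Prop :=
  (∀ k : ℕ, 1 ≤ k → (RightInvVals L k).Nonempty) ∧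
    BddAbove {c : ℝ | ∃ k : ℕ, 1 ≤ k ∧ c = sInf (RightInvVals L k)}

/-- `c(L) = (sup_k inf {‖R‖ : R right inverse of L_k})⁻¹`. -/
def cConst {d n : ℕ} (L : MatTup d n → Mat n) : ℝ :=
  (sSup {c : ℝ | ∃ k : ℕ, 1 ≤ k ∧ c = sInf (RightInvVals L k)})⁻¹

/-- Evaluation of a `J × J` matrix of free polynomials at `x ∈ M_n^d`, as an
`Jn × Jn` matrix. -/
def matPolyEval {d J n : ℕ} (δ : Matrix (Fin J) (Fin J) (FreePoly d)) (x : MatTup d n) :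
    Matrix (Fin (J * n)) (Fin (J * n)) ℂ :=
  fun p q => polyEval (δ (finProdFinEquiv.symm p).1 (finProdFinEquiv.symm q).1) x
    (finProdFinEquiv.symm p).2 (finProdFinEquiv.symm q).2

/-- The basic free open set `G_δ = {x : ‖δ(x)‖ < 1}`. -/
def GSet {d J : ℕ} (δ : Matrix (Fin J) (Fin J) (FreePoly d)) : Set (MSpace d) :=
  {x | ‖matPolyEval δ x.2‖ < 1}

/-- The linear map `Γ ↦ aΓ - Γa` from `M_n` to `M_n^d`. -/
def commMap {d n : ℕ} (a : MatTup d n) : Mat n →ₗ[ℂ] MatTup d n where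
  toFun := fun Γ => fun r => a r * Γ - Γ * a r
  map_add' := by
    intro Γ₁ Γ₂
    funext r
    simp only [Matrix.mul_add, Matrix.add_mul, Pi.add_apply]
    abel
  map_smul' := by
    intro c Γ
    funext r
    simp [Matrix.mul_smul, Matrix.smul_mul, smul_sub]

/-- The subspace `{aΓ - Γa : Γ ∈ M_n}` of `M_n^d`. -/
def commSubspace {d n : ℕ} (a : MatTup d n) : Submodule ℂ (MatTup d n) :=
  LinearMap.range (commMap a)

end


section Aux

lemma polyEval_mul {d n : ℕ} (p q : FreePoly d) (x : MatTup d n) :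
    polyEval (p * q) x = polyEval p x * polyEval q x := map_mul _ _ _

lemma key_deriv {d n : ℕ} (p : FreePoly d) (a : MatTup d n) (Γ : Mat n) :
    ∃ L : MatTup d n →L[ℂ] Mat n, HasFDerivAt (fun x : MatTup d n => polyEval p x) L a ∧
      L (fun r => a r * Γ - Γ * a r) = polyEval p a * Γ - Γ * polyEval p a := by
  induction p using FreeAlgebra.induction with
  | grade0 r =>
    refine ⟨0, ?_, ?_⟩
    · have : (fun x : MatTup d n => polyEval (algebraMap ℂ (FreePoly d) r) x)
          = fun _ => algebraMap ℂ (Mat n) r := by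
        funext x
        simp [polyEval]
      rw [this]
      exact hasFDerivAt_const _ _
    · simp [polyEval, Algebra.algebraMap_eq_smul_one, Matrix.smul_mul, Matrix.mul_smul]
  | grade1 i =>
    refine ⟨ContinuousLinearMap.proj i, ?_, ?_⟩
    · have : (fun x : MatTup d n => polyEval (FreeAlgebra.ι ℂ i) x) = fun x => x i := by
        funext x; simp [polyEval]
      rw [this]
      exact (ContinuousLinearMap.proj (R := ℂ) (φ := fun _ : Fin d => Mat n) i).hasFDerivAt
    · simp [polyEval]
  | mul p q hp hq =>
    obtain ⟨Lp, hLp, hLp'⟩ := hp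
    obtain ⟨Lq, hLq, hLq'⟩ := hq
    refine ⟨polyEval p a • Lq + Lp.smulRight (polyEval q a), ?_, ?_⟩
    · have : (fun x : MatTup d n => polyEval (p * q) x)
          = fun x => polyEval p x * polyEval q x := by
        funext x; exact polyEval_mul p q x
      rw [this]
      exact hLp.mul' hLq
    · rw [polyEval_mul]
      simp only [ContinuousLinearMap.add_apply, ContinuousLinearMap.smul_apply,
        ContinuousLinearMap.smulRight_apply, hLp', hLq', smul_eq_mul]
      noncomm_ring
  | add p q hp hq =>
    obtain ⟨Lp, hLp, hLp'⟩ := hp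
    obtain ⟨Lq, hLq, hLq'⟩ := hq
    refine ⟨Lp + Lq, ?_, ?_⟩
    · have : (fun x : MatTup d n => polyEval (p + q) x)
          = fun x => polyEval p x + polyEval q x := by
        funext x; exact map_add _ _ _
      rw [this]
      exact hLp.add hLq
    · have hpq : polyEval (p + q) a = polyEval p a + polyEval q a := map_add _ p q
      simp only [ContinuousLinearMap.add_apply, hLp', hLq', hpq]
      noncomm_ring

lemma polyDeriv_commutator {d n : ℕ} (p : FreePoly d) (a : MatTup d n) (Γ : Mat n) :
    polyDeriv p a (fun r => a r * Γ - Γ * a r)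
      = polyEval p a * Γ - Γ * polyEval p a := by
  obtain ⟨L, hL, hL'⟩ := key_deriv p a Γ
  rw [polyDeriv, hL.fderiv, hL']

end Aux

/-- If `p₁,…,p_k` are free polynomials in `k+1` variables, `(X₀, Y₀)` is a common zero,
and the map `h ↦ (Dp_j(X₀,Y₀)[(0,h)])_j` on `M_n^k` is bijective, then each `Y₀ⱼ`
commutes with `X₀`. -/
theorem codim_one_zero_sets_commute (k : ℕ) (hk : 1 ≤ k) (n : ℕ)
    (p : Fin k → FreePoly (k + 1)) (X₀ : Mat n) (Y₀ : Fin k → Mat n)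
    (hzero : ∀ j, polyEval (p j) (Fin.cons X₀ Y₀) = 0)
    (hbij : Function.Bijective fun h : Fin k → Mat n =>
      (fun j => polyDeriv (p j) (Fin.cons X₀ Y₀) (Fin.cons 0 h) : Fin k → Mat n)) :
    ∀ j, Commute X₀ (Y₀ j) := by
  set h₀ : Fin k → Mat n := fun j => Y₀ j * X₀ - X₀ * Y₀ j with hh₀
  have hcons : (Fin.cons 0 h₀ : Fin (k+1) → Mat n)
      = fun r => Fin.cons (α := fun _ : Fin (k+1) => Mat n) X₀ Y₀ r * X₀
          - X₀ * Fin.cons (α := fun _ : Fin (k+1) => Mat n) X₀ Y₀ r := by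
    funext r
    refine Fin.cases ?_ (fun j => ?_) r <;> simp [hh₀]
  have hzero' : ∀ j, polyDeriv (p j) (Fin.cons X₀ Y₀) (Fin.cons 0 h₀) = 0 := by
    intro j
    rw [hcons, polyDeriv_commutator, hzero j]
    simp
  have h0 : h₀ = 0 := by
    apply hbij.injective
    funext j
    simp only [hzero' j]
    have : (Fin.cons 0 (0 : Fin k → Mat n) : Fin (k+1) → Mat n) = 0 := by
      funext r; refine Fin.cases rfl (fun i => rfl) r
    rw [this, polyDeriv]
    simp
  intro j
  have := congrFun h0 j
  simp only [hh₀, Pi.zero_apply, sub_eq_zero] at this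
  exact this.symm
end

section
/- Let a,b,c ∈ ℂ with b + c ≠ 0, let X_0 ∈ M_n be invertible, and set 𝒴 = {Y ∈ M_n : aX_0² + bX_0Y + cYX_0 = 0}. Then: (i) −(a/(b+c))X_0 is the unique element of 𝒴 that commutes with X_0, and 𝒴 = {−(a/(b+c))X_0 + H : H ∈ M_n, bX_0H + cHX_0 = 0}; (ii) if the spectra σ(bX_0) and σ(−cX_0) are disjoint, then 𝒴 = {−(a/(b+c))X_0}. -/
open Matrix Filter Topology
open scoped Matrix.Norms.L2Operator Kronecker

section SylvesterAux
open Polynomial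

lemma eval_charpoly' {m : ℕ} (M : Matrix (Fin m) (Fin m) ℂ) (μ : ℂ) :
    (M.charpoly).eval μ = (Matrix.scalar (Fin m) μ - M).det := by
  rw [Matrix.charpoly, ← Polynomial.coe_evalRingHom, RingHom.map_det]
  congr 1
  ext i j
  by_cases h : i = j <;>
  simp [Matrix.charmatrix_apply, Matrix.scalar_apply, Matrix.diagonal_apply, h]

lemma mem_spectrum_iff_root {m : ℕ} (M : Matrix (Fin m) (Fin m) ℂ) (μ : ℂ) :
    μ ∈ spectrum ℂ M ↔ (M.charpoly).eval μ = 0 := by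
  rw [spectrum.mem_iff, eval_charpoly',
    show (algebraMap ℂ (Matrix (Fin m) (Fin m) ℂ)) μ = Matrix.scalar (Fin m) μ from rfl,
    Matrix.isUnit_iff_isUnit_det, isUnit_iff_ne_zero, not_ne_iff]

lemma intertwine_aeval {m : ℕ} (A B H : Matrix (Fin m) (Fin m) ℂ) (hAB : A * H = H * B)
    (p : ℂ[X]) : (aeval A p) * H = H * (aeval B p) := by
  induction p using Polynomial.induction_on with
  | C r =>
      simp [Algebra.algebraMap_eq_smul_one, smul_mul_assoc, mul_smul_comm]
  | add p q hp hq => simp [map_add, add_mul, mul_add, hp, hq]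
  | monomial k r h =>
      have h1 : aeval A (C r * X ^ (k + 1)) = aeval A (C r * X ^ k) * A := by
        simp [pow_succ, mul_assoc]
      have h2 : aeval B (C r * X ^ (k + 1)) = aeval B (C r * X ^ k) * B := by
        simp [pow_succ, mul_assoc]
      rw [h1, h2, mul_assoc, hAB, ← mul_assoc, h, mul_assoc]

lemma sylvester_unique {m : ℕ} (A B H : Matrix (Fin m) (Fin m) ℂ)
    (hdisj : spectrum ℂ A ∩ spectrum ℂ B = ∅) (hAB : A * H = H * B) : H = 0 := by
  rcases Nat.eq_zero_or_pos m with hm | hm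
  · subst hm; exact Subsingleton.elim _ _
  · have key : H * aeval B A.charpoly = 0 := by
      rw [← intertwine_aeval A B H hAB, Matrix.aeval_self_charpoly, zero_mul]
    have hdeg : 0 < A.charpoly.degree := by
      rw [Matrix.charpoly_degree_eq_dim]
      simpa using hm
    have hspec := spectrum.map_polynomial_aeval_of_degree_pos B A.charpoly hdeg
    have hunit : IsUnit (aeval B A.charpoly) := by
      rw [← spectrum.zero_notMem_iff ℂ, hspec]
      rintro ⟨μ, hμB, hμ0⟩
      have hμA : μ ∈ spectrum ℂ A := (mem_spectrum_iff_root A μ).mpr hμ0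
      exact Set.eq_empty_iff_forall_notMem.mp hdisj μ ⟨hμA, hμB⟩
    obtain ⟨u, hu⟩ := hunit
    have h0 : H * (↑u : Matrix (Fin m) (Fin m) ℂ) = 0 := by rw [hu]; exact key
    have h1 : H = H * (↑u : Matrix (Fin m) (Fin m) ℂ) * (↑u : Matrix (Fin m) (Fin m) ℂ)⁻¹ := by
      rw [mul_assoc, Matrix.mul_nonsing_inv _ ((Matrix.isUnit_iff_isUnit_det _).mp u.isUnit), mul_one]
    rw [h1, h0, zero_mul]

end SylvesterAux

/-- Solutions `Y` of `aX₀² + bX₀Y + cYX₀ = 0` for invertible `X₀` and `b + c ≠ 0`: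
the unique commuting solution is `-(a/(b+c))X₀`, the solution set is the affine space
of that solution plus solutions of the homogeneous Sylvester equation, and if
`σ(bX₀) ∩ σ(-cX₀) = ∅` then the solution is unique. -/
theorem quadratic_solution_set (n : ℕ) (a b c : ℂ) (hbc : b + c ≠ 0)
    (X₀ : Mat n) (hX : IsUnit X₀) :
    let Yc : Mat n := (-(a / (b + c))) • X₀
    let 𝒴 : Set (Mat n) := {Y | a • (X₀ * X₀) + b • (X₀ * Y) + c • (Y * X₀) = 0}
    (Yc ∈ 𝒴 ∧ Commute X₀ Yc ∧ ∀ Z ∈ 𝒴, Commute X₀ Z → Z = Yc) ∧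
    𝒴 = {Z | ∃ H : Mat n, b • (X₀ * H) + c • (H * X₀) = 0 ∧ Z = Yc + H} ∧
    (spectrum ℂ (b • X₀) ∩ spectrum ℂ ((-c) • X₀) = ∅ → 𝒴 = {Yc}) := by
  intro Yc 𝒴
  have hdet : IsUnit X₀.det := (Matrix.isUnit_iff_isUnit_det X₀).mp hX
  have hYcEq : a • (X₀ * X₀) + b • (X₀ * Yc) + c • (Yc * X₀) = 0 := by
    show a • (X₀ * X₀) + b • (X₀ * ((-(a / (b + c))) • X₀))
        + c • (((-(a / (b + c))) • X₀) * X₀) = 0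
    rw [mul_smul_comm, smul_mul_assoc, smul_smul, smul_smul, add_assoc, ← add_smul, ← add_smul]
    have hco : a + (b * -(a / (b + c)) + c * -(a / (b + c))) = 0 := by
      field_simp
      ring
    rw [hco, zero_smul]
  have hYc : Yc ∈ 𝒴 := hYcEq
  have hcommYc : Commute X₀ Yc := (Commute.refl X₀).smul_right _
  have hset : 𝒴 = {Z | ∃ H : Mat n, b • (X₀ * H) + c • (H * X₀) = 0 ∧ Z = Yc + H} := by
    ext Y
    simp only [Set.mem_setOf_eq]
    constructor
    · intro hY
      refine ⟨Y - Yc, ?_, by abel⟩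
      have key : b • (X₀ * (Y - Yc)) + c • ((Y - Yc) * X₀)
          = (a • (X₀ * X₀) + b • (X₀ * Y) + c • (Y * X₀))
            - (a • (X₀ * X₀) + b • (X₀ * Yc) + c • (Yc * X₀)) := by
        rw [mul_sub, sub_mul, smul_sub, smul_sub]
        abel
      rw [key, hY, hYcEq, sub_zero]
    · rintro ⟨H, hH, rfl⟩
      show a • (X₀ * X₀) + b • (X₀ * (Yc + H)) + c • ((Yc + H) * X₀) = 0
      have key : a • (X₀ * X₀) + b • (X₀ * (Yc + H)) + c • ((Yc + H) * X₀)
          = (a • (X₀ * X₀) + b • (X₀ * Yc) + c • (Yc * X₀))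
            + (b • (X₀ * H) + c • (H * X₀)) := by
        rw [mul_add, add_mul, smul_add, smul_add]
        abel
      rw [key, hYcEq, hH, add_zero]
  refine ⟨⟨hYc, hcommYc, ?_⟩, hset, ?_⟩
  · intro Z hZ hcomm
    have hZ' : a • (X₀ * X₀) + b • (Z * X₀) + c • (Z * X₀) = 0 := by
      have h0 : a • (X₀ * X₀) + b • (X₀ * Z) + c • (Z * X₀) = 0 := hZ
      rwa [hcomm.eq] at h0
    have h1 : X₀ * (a • X₀ + (b + c) • Z) = 0 := by
      rw [mul_add, mul_smul_comm, mul_smul_comm, hcomm.eq, add_smul, ← add_assoc]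
      exact hZ'
    have h2 : a • X₀ + (b + c) • Z = 0 := by
      have := congrArg (fun M => X₀⁻¹ * M) h1
      simpa [← mul_assoc, Matrix.nonsing_inv_mul X₀ hdet] using this
    have h3 : Z = (b + c)⁻¹ • ((b + c) • Z) := by
      rw [smul_smul, inv_mul_cancel₀ hbc, one_smul]
    have h4 : (b + c) • Z = (-a) • X₀ := by
      rw [eq_neg_of_add_eq_zero_right h2, neg_smul]
    rw [h3, h4]
    show (b + c)⁻¹ • (-a) • X₀ = (-(a / (b + c))) • X₀
    rw [smul_smul]
    congr 1
    field_simp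
  · intro hsp
    rw [hset]
    ext Z
    simp only [Set.mem_setOf_eq, Set.mem_singleton_iff]
    constructor
    · rintro ⟨H, hH, rfl⟩
      have hsyl : (b • X₀) * H = H * ((-c) • X₀) := by
        rw [smul_mul_assoc, mul_smul_comm, neg_smul]
        exact eq_neg_of_add_eq_zero_left hH
      rw [sylvester_unique _ _ _ hsp hsyl, add_zero]
    · rintro rfl
      exact ⟨0, by simp, by simp⟩
end

section
/- Let d ≥ 2, let a ∈ M_n^d be broad, let 0 ≤ N ≤ (d−1)n² + 1, and suppose H_1,…,H_N ∈ M_n^d are linearly independent modulo the subspace {(a_rΓ − Γa_r)_{r=1}^d : Γ ∈ M_n} of M_n^d. Then for every K_1,…,K_N ∈ M_n and every M ∈ M_n there exists a free polynomial p in d variables such that p(a) = M and Dp(a)[H_i] = K_i for all 1 ≤ i ≤ N. -/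
open Matrix Filter Topology
open scoped Matrix.Norms.L2Operator Kronecker

section AuxLemmas

open Matrix
variable {d n : ℕ}

lemma polyEval_differentiable (p : FreePoly d) :
    Differentiable ℂ (fun x : MatTup d n => polyEval p x) := by
  induction p using FreeAlgebra.induction with
  | grade0 r => simpa [polyEval] using differentiable_const _
  | grade1 i =>
      simp only [polyEval, FreeAlgebra.lift_ι_apply]
      exact (ContinuousLinearMap.proj (R := ℂ) (φ := fun _ : Fin d => Mat n) i).differentiable
  | mul p q hp hq =>
      have : (fun x : MatTup d n => polyEval (p * q) x)
          = fun x => polyEval p x * polyEval q x := by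
        funext x; exact map_mul (FreeAlgebra.lift ℂ fun i => x i) p q
      rw [this]; exact hp.mul hq
  | add p q hp hq =>
      have : (fun x : MatTup d n => polyEval (p + q) x)
          = fun x => polyEval p x + polyEval q x := by
        funext x; exact map_add (FreeAlgebra.lift ℂ fun i => x i) p q
      rw [this]; exact hp.add hq

lemma polyDeriv_add (p q : FreePoly d) (a h : MatTup d n) :
    polyDeriv (p + q) a h = polyDeriv p a h + polyDeriv q a h := by
  unfold polyDeriv
  have e : (fun x : MatTup d n => polyEval (p + q) x)
      = fun x => polyEval p x + polyEval q x := by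
    funext x; exact map_add (FreeAlgebra.lift ℂ fun i => x i) p q
  rw [e, fderiv_fun_add ((polyEval_differentiable p).differentiableAt)
    ((polyEval_differentiable q).differentiableAt)]
  rfl

lemma polyDeriv_sub (p q : FreePoly d) (a h : MatTup d n) :
    polyDeriv (p - q) a h = polyDeriv p a h - polyDeriv q a h := by
  unfold polyDeriv
  have e : (fun x : MatTup d n => polyEval (p - q) x)
      = fun x => polyEval p x - polyEval q x := by
    funext x; exact map_sub (FreeAlgebra.lift ℂ fun i => x i) p q
  rw [e, fderiv_fun_sub ((polyEval_differentiable p).differentiableAt)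
    ((polyEval_differentiable q).differentiableAt)]
  rfl

lemma polyDeriv_smul (c : ℂ) (p : FreePoly d) (a h : MatTup d n) :
    polyDeriv (c • p) a h = c • polyDeriv p a h := by
  unfold polyDeriv
  have e : (fun x : MatTup d n => polyEval (c • p) x)
      = fun x => c • polyEval p x := by
    funext x; exact map_smul (FreeAlgebra.lift ℂ fun i => x i) c p
  rw [e, fderiv_fun_const_smul ((polyEval_differentiable p).differentiableAt)]
  rfl

lemma polyDeriv_zero (a h : MatTup d n) : polyDeriv (0 : FreePoly d) a h = 0 := by
  unfold polyDeriv
  have e : (fun x : MatTup d n => polyEval (0 : FreePoly d) x) = fun _ => (0 : Mat n) := by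
    funext x; exact map_zero (FreeAlgebra.lift ℂ fun i => x i)
  rw [e, fderiv_fun_const]
  rfl

lemma polyDeriv_mul (p q : FreePoly d) (a h : MatTup d n) :
    polyDeriv (p * q) a h
      = polyEval p a * polyDeriv q a h + polyDeriv p a h * polyEval q a := by
  unfold polyDeriv
  have e : (fun x : MatTup d n => polyEval (p * q) x)
      = fun x => polyEval p x * polyEval q x := by
    funext x; exact map_mul (FreeAlgebra.lift ℂ fun i => x i) p q
  rw [e, fderiv_fun_mul' ((polyEval_differentiable p).differentiableAt)
    ((polyEval_differentiable q).differentiableAt)]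
  simp [smul_eq_mul]

lemma polyEval_iota (r : Fin d) (a : MatTup d n) :
    polyEval (FreeAlgebra.ι ℂ r) a = a r := by
  simp [polyEval]

lemma polyDeriv_iota (r : Fin d) (a h : MatTup d n) :
    polyDeriv (FreeAlgebra.ι ℂ r) a h = h r := by
  unfold polyDeriv
  have e : (fun x : MatTup d n => polyEval (FreeAlgebra.ι ℂ r) x)
      = ⇑(ContinuousLinearMap.proj (R := ℂ) (φ := fun _ : Fin d => Mat n) r) := by
    funext x; simp [polyEval]
  rw [e, ContinuousLinearMap.fderiv]
  rfl

lemma polyDeriv_dir_sum {N : ℕ} (p : FreePoly d) (a : MatTup d n) (lam : Fin N → ℂ)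
    (H : Fin N → MatTup d n) :
    polyDeriv p a (∑ i, lam i • H i) = ∑ i, lam i • polyDeriv p a (H i) := by
  unfold polyDeriv
  rw [map_sum]
  simp only [_root_.map_smul]

end AuxLemmas

noncomputable section AuxLemmas2

open Matrix
variable {d n N : ℕ}

/-- The set of derivative tuples of polynomials vanishing at `a`. -/
def Wset (a : MatTup d n) (H : Fin N → MatTup d n) : Set (Fin N → Mat n) :=
  {K | ∃ p : FreePoly d, polyEval p a = 0 ∧ ∀ i, polyDeriv p a (H i) = K i}

lemma Wset_zero (a : MatTup d n) (H : Fin N → MatTup d n) : (0 : Fin N → Mat n) ∈ Wset a H :=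
  ⟨0, map_zero _, fun i => polyDeriv_zero a (H i)⟩

lemma Wset_add {a : MatTup d n} {H : Fin N → MatTup d n} {K L : Fin N → Mat n}
    (hK : K ∈ Wset a H) (hL : L ∈ Wset a H) : K + L ∈ Wset a H := by
  obtain ⟨p, hp0, hpD⟩ := hK
  obtain ⟨q, hq0, hqD⟩ := hL
  exact ⟨p + q, by rw [show polyEval (p+q) a = polyEval p a + polyEval q a from
      map_add (FreeAlgebra.lift ℂ fun i => a i) p q, hp0, hq0, add_zero],
    fun i => by rw [polyDeriv_add, hpD i, hqD i]; rfl⟩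

lemma Wset_smul {a : MatTup d n} {H : Fin N → MatTup d n} {K : Fin N → Mat n}
    (c : ℂ) (hK : K ∈ Wset a H) : c • K ∈ Wset a H := by
  obtain ⟨p, hp0, hpD⟩ := hK
  exact ⟨c • p, by rw [show polyEval (c • p) a = c • polyEval p a from
      map_smul (FreeAlgebra.lift ℂ fun i => a i) c p, hp0, smul_zero],
    fun i => by rw [polyDeriv_smul, hpD i]; rfl⟩

lemma Wset_sum {a : MatTup d n} {H : Fin N → MatTup d n} {ι : Type*} (s : Finset ι)
    (f : ι → (Fin N → Mat n)) (hf : ∀ j ∈ s, f j ∈ Wset a H) :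
    (∑ j ∈ s, f j) ∈ Wset a H := by
  classical
  induction s using Finset.induction_on with
  | empty => simpa using Wset_zero a H
  | insert _ _ hx ih =>
      rw [Finset.sum_insert hx]
      exact Wset_add (hf _ (Finset.mem_insert_self _ _))
        (ih fun j hj => hf j (Finset.mem_insert_of_mem hj))

lemma Wset_conj {a : MatTup d n} (ha : Broad a) {H : Fin N → MatTup d n} {K : Fin N → Mat n}
    (A B : Mat n) (hK : K ∈ Wset a H) : (fun i => A * K i * B) ∈ Wset a H := by
  obtain ⟨p, hp0, hpD⟩ := hK
  obtain ⟨qA, hqA⟩ := ha A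
  obtain ⟨qB, hqB⟩ := ha B
  refine ⟨qA * p * qB, ?_, fun i => ?_⟩
  · rw [show polyEval (qA * p * qB) a = polyEval (qA * p) a * polyEval qB a from
      map_mul (FreeAlgebra.lift ℂ fun i => a i) _ _,
      show polyEval (qA * p) a = polyEval qA a * polyEval p a from
      map_mul (FreeAlgebra.lift ℂ fun i => a i) _ _, hp0, mul_zero, zero_mul]
  · rw [polyDeriv_mul, polyDeriv_mul,
      show polyEval (qA * p) a = polyEval qA a * polyEval p a from
      map_mul (FreeAlgebra.lift ℂ fun i => a i) _ _, hp0, hqA, hqB, hpD i]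
    simp

lemma stdBasis_conj (K : Mat n) (u s t w : Fin n) :
    single u s (1 : ℂ) * K * single t w (1 : ℂ)
      = K s t • single u w (1 : ℂ) := by
  ext p q
  rcases eq_or_ne q w with rfl | hq
  · rw [Matrix.mul_single_apply_same]
    rcases eq_or_ne p u with rfl | hp
    · rw [Matrix.single_mul_apply_same]
      simp [Matrix.single]
    · rw [Matrix.single_mul_apply_of_ne (h := hp)]
      simp [Matrix.single, Ne.symm hp]
  · rw [Matrix.mul_single_apply_of_ne (hbj := hq)]
    simp [Matrix.single, Ne.symm hq]

lemma sum_stdBasis_diag_eq_one :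
    ∑ k : Fin n, single k k (1 : ℂ) = (1 : Mat n) := by
  ext i j
  rw [Matrix.sum_apply, Finset.sum_eq_single i]
  · rcases eq_or_ne i j with rfl | hij
    · simp [Matrix.single]
    · simp [Matrix.single, hij, Matrix.one_apply]
  · intro k _ hk
    simp [Matrix.single, hk]
  · intro hi; exact absurd (Finset.mem_univ i) hi

lemma Wset_entry_smul {a : MatTup d n} (ha : Broad a) {H : Fin N → MatTup d n}
    {K : Fin N → Mat n} (hK : K ∈ Wset a H) (s t : Fin n) (T : Mat n) :
    (fun i => K i s t • T) ∈ Wset a H := by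
  classical
  have key : ∀ u w : Fin n,
      ((T u w : ℂ) • fun i => K i s t • single u w (1 : ℂ)) ∈ Wset a H := by
    intro u w
    refine Wset_smul _ ?_
    have := Wset_conj ha (single u s (1 : ℂ)) (single t w (1 : ℂ)) hK
    convert this using 1
    funext i
    rw [stdBasis_conj]
  have decomp : (fun i => K i s t • T)
      = ∑ u : Fin n, ∑ w : Fin n,
          ((T u w : ℂ) • fun i => K i s t • single u w (1 : ℂ)) := by
    funext i
    simp only [Finset.sum_apply, Pi.smul_apply]
    calc K i s t • T = K i s t • ∑ u : Fin n, ∑ w : Fin n, single u w (T u w) := by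
          rw [← matrix_eq_sum_single]
      _ = ∑ u : Fin n, ∑ w : Fin n, T u w • K i s t • single u w (1 : ℂ) := by
          rw [Finset.smul_sum]
          refine Finset.sum_congr rfl fun u _ => ?_
          rw [Finset.smul_sum]
          refine Finset.sum_congr rfl fun w _ => ?_
          simp only [Matrix.smul_single, smul_eq_mul, mul_one]
          congr 1
          ring
  rw [decomp]
  exact Wset_sum _ _ fun u _ => Wset_sum _ _ fun w _ => key u w

end AuxLemmas2

section AuxLemmas3

open Matrix

lemma derivation_inner {n : ℕ} (hn : 0 < n) (δ : Mat n → Mat n)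
    (h0 : δ 0 = 0)
    (hadd : ∀ M₁ M₂, δ (M₁ + M₂) = δ M₁ + δ M₂)
    (hsmul : ∀ (c : ℂ) (M : Mat n), δ (c • M) = c • δ M)
    (hmul : ∀ M₁ M₂, δ (M₁ * M₂) = δ M₁ * M₂ + M₁ * δ M₂) :
    ∃ Γ : Mat n, ∀ M, δ M = M * Γ - Γ * M := by
  classical
  obtain ⟨z⟩ : Nonempty (Fin n) := ⟨⟨0, hn⟩⟩
  set Γ := ∑ k : Fin n, single k z (1:ℂ) * δ (single z k 1) with hΓdef
  have unit : ∀ s t : Fin n,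
      δ (single s t (1:ℂ)) = single s t 1 * Γ - Γ * single s t 1 := by
    intro s t
    have h1 : single s t (1:ℂ) * Γ
        = single s z 1 * δ (single z t 1) := by
      rw [hΓdef, Finset.mul_sum, Finset.sum_eq_single t]
      · rw [← mul_assoc, Matrix.single_mul_single_same, mul_one]
      · intro k _ hk
        rw [← mul_assoc, Matrix.single_mul_single_of_ne (h := Ne.symm hk), zero_mul]
      · intro h; exact absurd (Finset.mem_univ t) h
    have h2 : Γ * single s t (1:ℂ)
        = single s z 1 * δ (single z t 1) - δ (single s t 1) := by
      have e : ∀ k : Fin n,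
          (single k z (1:ℂ) * δ (single z k 1)) * single s t 1
            = single k z 1 * δ (single z k 1 * single s t 1)
              - single k z 1 * (single z k 1 * δ (single s t 1)) := by
        intro k
        rw [mul_assoc, show δ (single z k (1:ℂ)) * single s t 1
            = δ (single z k 1 * single s t 1)
              - single z k 1 * δ (single s t 1) from
          (eq_sub_of_add_eq (hmul _ _).symm), mul_sub]
      rw [hΓdef, Finset.sum_mul, Finset.sum_congr rfl fun k _ => e k, Finset.sum_sub_distrib]
      congr 1
      · rw [Finset.sum_eq_single s]
        · rw [Matrix.single_mul_single_same, one_mul]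
        · intro k _ hk
          rw [Matrix.single_mul_single_of_ne (h := hk), h0, mul_zero]
        · intro h; exact absurd (Finset.mem_univ s) h
      · have e2 : ∀ k : Fin n, single k z (1:ℂ)
            * (single z k 1 * δ (single s t 1))
            = single k k 1 * δ (single s t 1) := by
          intro k
          rw [← mul_assoc, Matrix.single_mul_single_same, mul_one]
        rw [Finset.sum_congr rfl fun k _ => e2 k, ← Finset.sum_mul, sum_stdBasis_diag_eq_one,
          one_mul]
    rw [h1, h2]
    abel
  have δsum : ∀ (s : Finset (Fin n × Fin n)) (f : Fin n × Fin n → Mat n),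
      δ (∑ j ∈ s, f j) = ∑ j ∈ s, δ (f j) := by
    intro s f
    induction s using Finset.induction_on with
    | empty => simpa using h0
    | insert _ _ hx ih => rw [Finset.sum_insert hx, hadd, ih, Finset.sum_insert hx]
  refine ⟨Γ, fun M => ?_⟩
  have hM : M = ∑ st : Fin n × Fin n, (M st.1 st.2) • single st.1 st.2 (1:ℂ) := by
    conv_lhs => rw [matrix_eq_sum_single M]
    rw [← Fintype.sum_prod_type']
    refine Finset.sum_congr rfl fun st _ => ?_
    rw [Matrix.smul_single, smul_eq_mul, mul_one]
  calc δ M = ∑ st : Fin n × Fin n, (M st.1 st.2) • δ (single st.1 st.2 (1:ℂ)) := by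
        conv_lhs => rw [hM]
        rw [δsum]
        exact Finset.sum_congr rfl fun st _ => hsmul _ _
    _ = ∑ st : Fin n × Fin n,
          (((M st.1 st.2) • single st.1 st.2 (1:ℂ)) * Γ
            - Γ * ((M st.1 st.2) • single st.1 st.2 (1:ℂ))) := by
        refine Finset.sum_congr rfl fun st _ => ?_
        rw [unit st.1 st.2, smul_sub, smul_mul_assoc, mul_smul_comm]
    _ = M * Γ - Γ * M := by
        rw [Finset.sum_sub_distrib, ← Finset.sum_mul, ← Finset.mul_sum, ← hM]

end AuxLemmas3


/-- If `a ∈ M_n^d` is broad and `H₁,…,H_N` are linearly independent modulo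
`{aΓ - Γa : Γ ∈ M_n}`, with `N ≤ (d-1)n² + 1`, then one can prescribe the value and
the derivatives in the directions `Hᵢ` of a free polynomial at `a` arbitrarily. -/
theorem prescribe_value_and_derivatives (d n N : ℕ) (hd : 2 ≤ d)
    (hN : N ≤ (d - 1) * n ^ 2 + 1) (a : MatTup d n) (ha : Broad a)
    (H : Fin N → MatTup d n)
    (hind : LinearIndependent ℂ fun i : Fin N =>
      Submodule.Quotient.mk (p := commSubspace a) (H i)) :
    ∀ (K : Fin N → Mat n) (M : Mat n),
      ∃ p : FreePoly d, polyEval p a = M ∧ ∀ i, polyDeriv p a (H i) = K i := by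
    classical
  rcases Nat.eq_zero_or_pos n with rfl | hn
  · -- trivial case `n = 0`
    have hsub : ∀ X Y : Mat 0, X = Y := fun X Y => by
      ext i j; exact i.elim0
    exact fun K M => ⟨0, hsub _ _, fun i => hsub _ _⟩
  intro K M
  set S : Set (Fin N → ℂ) :=
    {v | ∃ K' ∈ Wset a H, ∃ s t : Fin n, v = fun i => K' i s t} with hS
  by_cases hV : Submodule.span ℂ S = ⊤
  · -- the span of the entry vectors is everything: surjectivity
    let V' : Submodule ℂ (Fin N → ℂ) :=
      { carrier := {v | ∀ T : Mat n, (fun i => v i • T) ∈ Wset a H}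
        add_mem' := by
          intro v w hv hw T
          have h := Wset_add (hv T) (hw T)
          convert h using 1
          funext i
          simp [add_smul]
        zero_mem' := by
          intro T
          have h := Wset_zero a H
          convert h using 1
          funext i
          simp
        smul_mem' := by
          intro c v hv T
          have h := Wset_smul c (hv T)
          convert h using 1
          funext i
          simp [smul_smul] }
    have hSV' : S ⊆ (V' : Set (Fin N → ℂ)) := by
      rintro v ⟨K', hK', s, t, rfl⟩
      intro T
      exact Wset_entry_smul ha hK' s t T
    have hall : ∀ (v : Fin N → ℂ) (T : Mat n), (fun i => v i • T) ∈ Wset a H := by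
      intro v T
      have hv : v ∈ Submodule.span ℂ S := hV ▸ Submodule.mem_top
      exact (Submodule.span_le.mpr hSV') hv T
    have Wuniv : ∀ K' : Fin N → Mat n, K' ∈ Wset a H := by
      intro K'
      have hdec : K' = ∑ j : Fin N, (fun i => ((Pi.single j (1:ℂ) : Fin N → ℂ) i) • K' j) := by
        funext i
        rw [Finset.sum_apply, Finset.sum_eq_single i]
        · simp [Pi.single_apply]
        · intro j _ hji
          simp [Pi.single_apply, Ne.symm hji]
        · intro h; exact absurd (Finset.mem_univ i) h
      rw [hdec]
      exact Wset_sum _ _ fun j _ => hall (Pi.single j 1) (K' j)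
    obtain ⟨p₀, hp₀⟩ := ha M
    obtain ⟨q, hq0, hqD⟩ := Wuniv (fun i => K i - polyDeriv p₀ a (H i))
    refine ⟨p₀ + q, ?_, fun i => ?_⟩
    · rw [show polyEval (p₀ + q) a = polyEval p₀ a + polyEval q a from
        map_add (FreeAlgebra.lift ℂ fun i => a i) p₀ q, hp₀, hq0, add_zero]
    · rw [polyDeriv_add, hqD i, add_sub_cancel]
  · -- otherwise: contradiction with linear independence
    exfalso
    obtain ⟨x, hx⟩ : ∃ x, x ∉ Submodule.span ℂ S := by
      by_contra h
      push_neg at h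
      exact hV (Submodule.eq_top_iff'.mpr h)
    obtain ⟨f, hfx, hfbot⟩ := Submodule.exists_dual_map_eq_bot_of_notMem hx inferInstance
    set lam : Fin N → ℂ := fun i => f (Pi.single i 1) with hlam
    have hvdec : ∀ v : Fin N → ℂ, v = ∑ i, v i • (Pi.single i (1:ℂ) : Fin N → ℂ) := by
      intro v
      funext j
      rw [Finset.sum_apply, Finset.sum_eq_single j]
      · simp [Pi.single_apply]
      · intro i _ hij
        simp [Pi.single_apply, Ne.symm hij]
      · intro h; exact absurd (Finset.mem_univ j) h
    have hfv : ∀ v : Fin N → ℂ, f v = ∑ i, v i * lam i := by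
      intro v
      conv_lhs => rw [hvdec v]
      rw [map_sum]
      exact Finset.sum_congr rfl fun i _ => by rw [_root_.map_smul f (v i), smul_eq_mul]
    have hfS : ∀ v ∈ Submodule.span ℂ S, f v = 0 := by
      intro v hv
      have hm : f v ∈ Submodule.map f (Submodule.span ℂ S) := ⟨v, hv, rfl⟩
      rw [hfbot] at hm
      simpa using hm
    have hlamW : ∀ K' ∈ Wset a H, ∑ i, lam i • K' i = 0 := by
      intro K' hK'
      ext s t
      rw [Matrix.sum_apply]
      have hv : (fun i => K' i s t) ∈ S := ⟨K', hK', s, t, rfl⟩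
      have h0 := hfS _ (Submodule.subset_span hv)
      rw [hfv] at h0
      simpa [Matrix.smul_apply, smul_eq_mul, mul_comm] using h0
    set H' : MatTup d n := ∑ i, lam i • H i with hH'def
    have hwd : ∀ p q : FreePoly d, polyEval p a = polyEval q a →
        polyDeriv p a H' = polyDeriv q a H' := by
      intro p q hpq
      have h0 : polyEval (p - q) a = 0 := by
        rw [show polyEval (p - q) a = polyEval p a - polyEval q a from
          map_sub (FreeAlgebra.lift ℂ fun i => a i) p q, hpq, sub_self]
      have hmem : (fun i => polyDeriv (p - q) a (H i)) ∈ Wset a H :=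
        ⟨p - q, h0, fun i => rfl⟩
      have h2 : polyDeriv (p - q) a H' = 0 := by
        rw [hH'def, polyDeriv_dir_sum]
        exact hlamW _ hmem
      rw [polyDeriv_sub] at h2
      exact sub_eq_zero.mp h2
    set P : Mat n → FreePoly d := fun M' => Classical.choose (ha M') with hPdef
    have hP : ∀ M', polyEval (P M') a = M' := fun M' => Classical.choose_spec (ha M')
    set δ : Mat n → Mat n := fun M' => polyDeriv (P M') a H' with hδdef
    have hδp : ∀ p : FreePoly d, polyDeriv p a H' = δ (polyEval p a) := by
      intro p
      exact hwd p (P (polyEval p a)) (hP _).symm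
    have hδ0 : δ 0 = 0 := by
      have h := hδp 0
      rw [polyDeriv_zero, show polyEval (0 : FreePoly d) a = 0 from
        map_zero (FreeAlgebra.lift ℂ fun i => a i)] at h
      exact h.symm
    have hδadd : ∀ M₁ M₂, δ (M₁ + M₂) = δ M₁ + δ M₂ := by
      intro M₁ M₂
      have h := hδp (P M₁ + P M₂)
      rw [polyDeriv_add, show polyEval (P M₁ + P M₂) a = polyEval (P M₁) a + polyEval (P M₂) a
        from map_add (FreeAlgebra.lift ℂ fun i => a i) _ _, hP, hP] at h
      exact h.symm
    have hδsmul : ∀ (c : ℂ) (M' : Mat n), δ (c • M') = c • δ M' := by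
      intro c M'
      have h := hδp (c • P M')
      rw [polyDeriv_smul, show polyEval (c • P M') a = c • polyEval (P M') a
        from map_smul (FreeAlgebra.lift ℂ fun i => a i) c _, hP] at h
      exact h.symm
    have hδmul : ∀ M₁ M₂, δ (M₁ * M₂) = δ M₁ * M₂ + M₁ * δ M₂ := by
      intro M₁ M₂
      have h := hδp (P M₁ * P M₂)
      rw [polyDeriv_mul, show polyEval (P M₁ * P M₂) a = polyEval (P M₁) a * polyEval (P M₂) a
        from map_mul (FreeAlgebra.lift ℂ fun i => a i) _ _, hP, hP] at h
      rw [← h, add_comm]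
    obtain ⟨Γ, hΓ⟩ := derivation_inner hn δ hδ0 hδadd hδsmul hδmul
    have hH'r : ∀ r, H' r = a r * Γ - Γ * a r := by
      intro r
      have h := hδp (FreeAlgebra.ι ℂ r)
      rw [polyDeriv_iota, polyEval_iota] at h
      rw [h, hΓ]
    have hmem : H' ∈ commSubspace a := ⟨Γ, funext fun r => (hH'r r).symm⟩
    have hmk0 : ∑ i, lam i • Submodule.Quotient.mk (p := commSubspace a) (H i) = 0 := by
      have h1 : Submodule.Quotient.mk (p := commSubspace a) H'
          = ∑ i, lam i • Submodule.Quotient.mk (p := commSubspace a) (H i) := by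
        rw [hH'def]
        simp only [← Submodule.mkQ_apply, map_sum, _root_.map_smul]
      rw [← h1, Submodule.Quotient.mk_eq_zero]
      exact hmem
    obtain ⟨j, hj⟩ : ∃ j, lam j ≠ 0 := by
      by_contra h
      push_neg at h
      apply hfx
      rw [hfv]
      simp [h]
    exact hj (Fintype.linearIndependent_iff.mp hind lam hmk0 j)
end

section
/- Let U ⊆ M^d be an nc domain and f a fine holomorphic function on U. Suppose a ∈ U ∩ M_n^d and h ∈ M_n^d are such that the d-tuple of 2n×2n block matrices x with x_r = [[a_r, h_r],[0, a_r]] lies in U ∩ M_{2n}^d. Then the derivative Df(a)[h] = lim_{t→0} (f(a+th) − f(a))/t exists and f(x) = [[f(a), Df(a)[h]],[0, f(a)]] as a 2n×2n block matrix. -/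
open Matrix Filter Topology
open scoped Matrix.Norms.L2Operator Kronecker

noncomputable section Aux

namespace BlkAux
variable {n m : ℕ}

theorem blk_mul (A : Matrix (Fin n) (Fin n) ℂ) (B : Matrix (Fin n) (Fin m) ℂ)
    (C : Matrix (Fin m) (Fin n) ℂ) (D : Matrix (Fin m) (Fin m) ℂ)
    (A' : Matrix (Fin n) (Fin n) ℂ) (B' : Matrix (Fin n) (Fin m) ℂ)
    (C' : Matrix (Fin m) (Fin n) ℂ) (D' : Matrix (Fin m) (Fin m) ℂ) :
    blk A B C D * blk A' B' C' D' =
      blk (A*A' + B*C') (A*B' + B*D') (C*A' + D*C') (C*B' + D*D') := by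
  simp only [blk, Matrix.reindex_apply, Matrix.submatrix_mul_equiv,
    Matrix.fromBlocks_multiply]

theorem blk_add (A A' : Matrix (Fin n) (Fin n) ℂ) (B B' : Matrix (Fin n) (Fin m) ℂ)
    (C C' : Matrix (Fin m) (Fin n) ℂ) (D D' : Matrix (Fin m) (Fin m) ℂ) :
    blk A B C D + blk A' B' C' D' = blk (A+A') (B+B') (C+C') (D+D') := by
  ext p q
  simp [blk, Matrix.fromBlocks]
  rcases finSumFinEquiv.symm p with i | i <;> rcases finSumFinEquiv.symm q with j | j <;> simp

theorem blk_sub (A A' : Matrix (Fin n) (Fin n) ℂ) (B B' : Matrix (Fin n) (Fin m) ℂ)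
    (C C' : Matrix (Fin m) (Fin n) ℂ) (D D' : Matrix (Fin m) (Fin m) ℂ) :
    blk A B C D - blk A' B' C' D' = blk (A-A') (B-B') (C-C') (D-D') := by
  ext p q
  simp [blk, Matrix.fromBlocks]
  rcases finSumFinEquiv.symm p with i | i <;> rcases finSumFinEquiv.symm q with j | j <;> simp

theorem blk_smul (c : ℂ) (A : Matrix (Fin n) (Fin n) ℂ) (B : Matrix (Fin n) (Fin m) ℂ)
    (C : Matrix (Fin m) (Fin n) ℂ) (D : Matrix (Fin m) (Fin m) ℂ) :
    c • blk A B C D = blk (c•A) (c•B) (c•C) (c•D) := by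
  ext p q
  simp [blk, Matrix.fromBlocks]
  rcases finSumFinEquiv.symm p with i | i <;> rcases finSumFinEquiv.symm q with j | j <;> simp

theorem blk_one : (blk 1 0 0 1 : Mat (n + m)) = 1 := by
  simp [blk, Matrix.fromBlocks_one]


def blkA (M : Mat (n + m)) : Matrix (Fin n) (Fin n) ℂ :=
  fun i j => M (finSumFinEquiv (Sum.inl i)) (finSumFinEquiv (Sum.inl j))
def blkB (M : Mat (n + m)) : Matrix (Fin n) (Fin m) ℂ :=
  fun i j => M (finSumFinEquiv (Sum.inl i)) (finSumFinEquiv (Sum.inr j))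
def blkC (M : Mat (n + m)) : Matrix (Fin m) (Fin n) ℂ :=
  fun i j => M (finSumFinEquiv (Sum.inr i)) (finSumFinEquiv (Sum.inl j))
def blkD (M : Mat (n + m)) : Matrix (Fin m) (Fin m) ℂ :=
  fun i j => M (finSumFinEquiv (Sum.inr i)) (finSumFinEquiv (Sum.inr j))

theorem blk_eq (M : Mat (n + m)) : blk (blkA M) (blkB M) (blkC M) (blkD M) = M := by
  ext p q
  obtain ⟨x, rfl⟩ := finSumFinEquiv.surjective p
  obtain ⟨y, rfl⟩ := finSumFinEquiv.surjective q
  cases x <;> cases y <;>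
    simp [blk, blkA, blkB, blkC, blkD, Matrix.fromBlocks]

theorem blkA_blk (A : Matrix (Fin n) (Fin n) ℂ) (B : Matrix (Fin n) (Fin m) ℂ)
    (C : Matrix (Fin m) (Fin n) ℂ) (D : Matrix (Fin m) (Fin m) ℂ) : blkA (blk A B C D) = A := by
  ext i j; simp [blk, blkA, Matrix.fromBlocks]
theorem blkB_blk (A : Matrix (Fin n) (Fin n) ℂ) (B : Matrix (Fin n) (Fin m) ℂ)
    (C : Matrix (Fin m) (Fin n) ℂ) (D : Matrix (Fin m) (Fin m) ℂ) : blkB (blk A B C D) = B := by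
  ext i j; simp [blk, blkB, Matrix.fromBlocks]
theorem blkC_blk (A : Matrix (Fin n) (Fin n) ℂ) (B : Matrix (Fin n) (Fin m) ℂ)
    (C : Matrix (Fin m) (Fin n) ℂ) (D : Matrix (Fin m) (Fin m) ℂ) : blkC (blk A B C D) = C := by
  ext i j; simp [blk, blkC, Matrix.fromBlocks]
theorem blkD_blk (A : Matrix (Fin n) (Fin n) ℂ) (B : Matrix (Fin n) (Fin m) ℂ)
    (C : Matrix (Fin m) (Fin n) ℂ) (D : Matrix (Fin m) (Fin m) ℂ) : blkD (blk A B C D) = D := by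
  ext i j; simp [blk, blkD, Matrix.fromBlocks]

theorem blkB_sub (M N : Mat (n + m)) : blkB (M - N) = blkB M - blkB N := by
  ext i j; simp [blkB]

/-- Coordinates of a Euclidean vector are bounded by its norm. -/
theorem euclid_coord_le {k : ℕ} (v : EuclideanSpace ℂ (Fin k)) (i : Fin k) : ‖v i‖ ≤ ‖v‖ := by
  rw [EuclideanSpace.norm_eq]
  have h1 : ‖v i‖ ^ 2 ≤ ∑ j, ‖v j‖ ^ 2 :=
    Finset.single_le_sum (f := fun j => ‖v j‖ ^ 2) (fun j _ => sq_nonneg _) (Finset.mem_univ i)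
  calc ‖v i‖ = Real.sqrt (‖v i‖ ^ 2) := by rw [Real.sqrt_sq (norm_nonneg _)]
  _ ≤ _ := Real.sqrt_le_sqrt h1

/-- Entries are bounded by the L² operator norm. -/
theorem entry_le_norm (M : Matrix (Fin n) (Fin m) ℂ) (p : Fin n) (q : Fin m) :
    ‖M p q‖ ≤ ‖M‖ := by
  have h := M.l2_opNorm_mulVec ((EuclideanSpace.equiv (Fin m) ℂ).symm (Pi.single q 1))
  have hs : ‖(EuclideanSpace.equiv (Fin m) ℂ).symm (Pi.single q (1:ℂ))‖ = 1 := by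
    have : (EuclideanSpace.equiv (Fin m) ℂ).symm (Pi.single q (1:ℂ))
        = EuclideanSpace.single q (1:ℂ) := rfl
    rw [this, EuclideanSpace.norm_single, norm_one]
  rw [hs, mul_one] at h
  refine le_trans ?_ (le_trans (euclid_coord_le _ p) h)
  have : (M *ᵥ Pi.single q 1) p = M p q := by
    simp [Matrix.mulVec_single]
  exact le_of_eq (by rw [← this]; rfl)

theorem l2_opNorm_le_bound (M : Matrix (Fin n) (Fin m) ℂ) {K : ℝ} (hK : 0 ≤ K)
    (hb : ∀ x : EuclideanSpace ℂ (Fin m),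
      ‖(EuclideanSpace.equiv (Fin n) ℂ).symm (M *ᵥ x)‖ ≤ K * ‖x‖) : ‖M‖ ≤ K := by
  rw [Matrix.l2_opNorm_def]
  exact ContinuousLinearMap.opNorm_le_bound _ hK fun x => hb x

theorem norm_stdBasisMatrix_le (p : Fin n) (q : Fin m) (c : ℂ) :
    ‖Matrix.single p q c‖ ≤ ‖c‖ := by
  refine l2_opNorm_le_bound _ (norm_nonneg c) fun x => ?_
  have h1 : (Matrix.single p q c) *ᵥ x = Function.update (0 : Fin n → ℂ) p (c * x q) :=
    Matrix.single_mulVec p q c x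
  have h2 : (EuclideanSpace.equiv (Fin n) ℂ).symm ((Matrix.single p q c) *ᵥ x)
      = EuclideanSpace.single p (c * x q) := by rw [h1]; rfl
  rw [h2, EuclideanSpace.norm_single, norm_mul]
  exact mul_le_mul_of_nonneg_left (euclid_coord_le x q) (norm_nonneg c)

/-- The L² operator norm is bounded by the sum of entry norms. -/
theorem norm_le_sum_entries (M : Matrix (Fin n) (Fin m) ℂ) :
    ‖M‖ ≤ ∑ p, ∑ q, ‖M p q‖ := by
  have hM : M = ∑ p, ∑ q, Matrix.single p q (M p q) :=
    Matrix.matrix_eq_sum_single M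
  calc ‖M‖ = ‖∑ p, ∑ q, Matrix.single p q (M p q)‖ := by rw [← hM]
  _ ≤ ∑ p, ‖∑ q, Matrix.single p q (M p q)‖ := norm_sum_le _ _
  _ ≤ ∑ p, ∑ q, ‖Matrix.single p q (M p q)‖ :=
      Finset.sum_le_sum fun p _ => norm_sum_le _ _
  _ ≤ ∑ p, ∑ q, ‖M p q‖ :=
      Finset.sum_le_sum fun p _ => Finset.sum_le_sum fun q _ => norm_stdBasisMatrix_le p q _

theorem blk_apply11 (A : Matrix (Fin n) (Fin n) ℂ) (B : Matrix (Fin n) (Fin m) ℂ)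
    (C : Matrix (Fin m) (Fin n) ℂ) (D : Matrix (Fin m) (Fin m) ℂ) (i j : Fin n) :
    blk A B C D (finSumFinEquiv (Sum.inl i)) (finSumFinEquiv (Sum.inl j)) = A i j := by
  simp [blk, Matrix.fromBlocks]
theorem blk_apply12 (A : Matrix (Fin n) (Fin n) ℂ) (B : Matrix (Fin n) (Fin m) ℂ)
    (C : Matrix (Fin m) (Fin n) ℂ) (D : Matrix (Fin m) (Fin m) ℂ) (i : Fin n) (j : Fin m) :
    blk A B C D (finSumFinEquiv (Sum.inl i)) (finSumFinEquiv (Sum.inr j)) = B i j := by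
  simp [blk, Matrix.fromBlocks]
theorem blk_apply21 (A : Matrix (Fin n) (Fin n) ℂ) (B : Matrix (Fin n) (Fin m) ℂ)
    (C : Matrix (Fin m) (Fin n) ℂ) (D : Matrix (Fin m) (Fin m) ℂ) (i : Fin m) (j : Fin n) :
    blk A B C D (finSumFinEquiv (Sum.inr i)) (finSumFinEquiv (Sum.inl j)) = C i j := by
  simp [blk, Matrix.fromBlocks]
theorem blk_apply22 (A : Matrix (Fin n) (Fin n) ℂ) (B : Matrix (Fin n) (Fin m) ℂ)
    (C : Matrix (Fin m) (Fin n) ℂ) (D : Matrix (Fin m) (Fin m) ℂ) (i j : Fin m) :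
    blk A B C D (finSumFinEquiv (Sum.inr i)) (finSumFinEquiv (Sum.inr j)) = D i j := by
  simp [blk, Matrix.fromBlocks]

theorem norm_blk_le (A : Matrix (Fin n) (Fin n) ℂ) (B : Matrix (Fin n) (Fin m) ℂ)
    (C : Matrix (Fin m) (Fin n) ℂ) (D : Matrix (Fin m) (Fin m) ℂ) :
    ‖blk A B C D‖ ≤ (((n+m)*(n+m) : ℕ) : ℝ) * (‖A‖ + ‖B‖ + ‖C‖ + ‖D‖) := by
  have hent : ∀ p q, ‖blk A B C D p q‖ ≤ ‖A‖ + ‖B‖ + ‖C‖ + ‖D‖ := by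
    intro p q
    have hA := norm_nonneg A; have hB := norm_nonneg B
    have hC := norm_nonneg C; have hD := norm_nonneg D
    obtain ⟨x, rfl⟩ := finSumFinEquiv.surjective p
    obtain ⟨y, rfl⟩ := finSumFinEquiv.surjective q
    cases x with
    | inl i => cases y with
      | inl j => rw [blk_apply11]; linarith [entry_le_norm A i j]
      | inr j => rw [blk_apply12]; linarith [entry_le_norm B i j]
    | inr i => cases y with
      | inl j => rw [blk_apply21]; linarith [entry_le_norm C i j]
      | inr j => rw [blk_apply22]; linarith [entry_le_norm D i j]
  calc ‖blk A B C D‖ ≤ ∑ p, ∑ q, ‖blk A B C D p q‖ := norm_le_sum_entries _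
  _ ≤ ∑ _p : Fin (n+m), ∑ _q : Fin (n+m), (‖A‖ + ‖B‖ + ‖C‖ + ‖D‖) :=
      Finset.sum_le_sum fun p _ => Finset.sum_le_sum fun q _ => hent p q
  _ = (((n+m)*(n+m) : ℕ) : ℝ) * (‖A‖ + ‖B‖ + ‖C‖ + ‖D‖) := by
      simp [Finset.sum_const, mul_assoc]; ring

theorem norm_blkB_le (M : Mat (n + m)) : ‖blkB M‖ ≤ ((n*m : ℕ) : ℝ) * ‖M‖ := by
  have hent : ∀ (p : Fin n) (q : Fin m), ‖blkB M p q‖ ≤ ‖M‖ := fun p q => entry_le_norm M _ _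
  calc ‖blkB M‖ ≤ ∑ p, ∑ q, ‖blkB M p q‖ := norm_le_sum_entries _
  _ ≤ ∑ _p : Fin n, ∑ _q : Fin m, ‖M‖ :=
      Finset.sum_le_sum fun p _ => Finset.sum_le_sum fun q _ => hent p q
  _ = ((n*m : ℕ) : ℝ) * ‖M‖ := by simp [Finset.sum_const, mul_assoc]

theorem eq_zero_of_norm_le_all {x : ℂ} (hx : ∀ ε : ℝ, 0 < ε → ‖x‖ ≤ ε) : x = 0 := by
  by_contra hne
  have h0 : 0 < ‖x‖ := norm_pos_iff.mpr hne
  have := hx (‖x‖/2) (by linarith)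
  linarith

section sim
variable {k : ℕ}

/-- upper triangular unit `s = [[1, μ·1],[0,1]]` is invertible with the expected inverse. -/
theorem tri_mul_tri (μ ν : ℂ) :
    (blk 1 (μ•(1 : Mat k)) 0 1) * (blk 1 (ν•(1 : Mat k)) 0 1) = blk 1 ((μ+ν)•1) 0 1 := by
  rw [blk_mul]
  congr 1 <;> simp [add_smul] <;> abel

theorem tri_inv (μ : ℂ) :
    (blk 1 (μ•(1 : Mat k)) 0 1)⁻¹ = blk 1 ((-μ)•1) 0 1 := by
  apply Matrix.inv_eq_right_inv
  rw [tri_mul_tri]; simp [blk_one]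

theorem tri_isUnit (μ : ℂ) : IsUnit (blk 1 (μ•(1 : Mat k)) 0 1) := by
  have h : (blk 1 (μ•(1 : Mat k)) 0 1) * (blk 1 ((-μ)•1) 0 1) = 1 := by
    rw [tri_mul_tri]; simp [blk_one]
  exact ⟨⟨_, _, h, mul_eq_one_comm.mp h⟩, rfl⟩

/-- conjugation of a block-diagonal by the triangular unit. -/
theorem tri_conj (μ : ℂ) (X Y : Mat k) :
    (blk 1 (μ•(1 : Mat k)) 0 1)⁻¹ * blk X 0 0 Y * blk 1 (μ•(1 : Mat k)) 0 1
      = blk X (μ•(X - Y)) 0 Y := by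
  rw [tri_inv, blk_mul, blk_mul]
  congr 1 <;> simp [Matrix.smul_mul, Matrix.mul_smul, smul_sub] <;> abel

theorem diag_mul_diag (s t : ℂ) :
    (blk (1 : Mat k) 0 0 (s•(1 : Mat k))) * (blk (1 : Mat k) 0 0 (t•(1 : Mat k)))
      = blk (1 : Mat k) 0 0 ((s*t)•(1 : Mat k)) := by
  rw [blk_mul]
  congr 1 <;> simp [smul_smul, mul_comm]

theorem diag_inv {t : ℂ} (ht : t ≠ 0) :
    (blk (1 : Mat k) 0 0 (t•(1 : Mat k)))⁻¹ = blk (1 : Mat k) 0 0 (t⁻¹•(1 : Mat k)) := by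
  apply Matrix.inv_eq_right_inv
  rw [diag_mul_diag]; simp [mul_inv_cancel₀ ht, blk_one]

theorem diag_isUnit {t : ℂ} (ht : t ≠ 0) : IsUnit (blk (1 : Mat k) 0 0 (t•(1 : Mat k))) := by
  have h : (blk (1 : Mat k) 0 0 (t•(1 : Mat k))) * (blk (1 : Mat k) 0 0 (t⁻¹•(1 : Mat k))) = 1 := by
    rw [diag_mul_diag]; simp [mul_inv_cancel₀ ht, blk_one]
  exact ⟨⟨_, _, h, mul_eq_one_comm.mp h⟩, rfl⟩

/-- conjugating an arbitrary block matrix by `diag(1, t)`. -/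
theorem diag_conj {t : ℂ} (ht : t ≠ 0) (P Q R S : Mat k) :
    (blk (1 : Mat k) 0 0 (t•(1 : Mat k)))⁻¹ * blk P Q R S * blk (1 : Mat k) 0 0 (t•(1 : Mat k))
      = blk P (t•Q) (t⁻¹•R) S := by
  rw [diag_inv ht, blk_mul, blk_mul]
  congr 1 <;> simp [Matrix.smul_mul, Matrix.mul_smul, smul_smul, inv_mul_cancel₀ ht, mul_inv_cancel₀ ht]

end sim
end BlkAux

open BlkAux

namespace NCAux

/-- The upper triangular point `[[b, μ(b-c)],[0,c]]`. -/
def triTup {d m : ℕ} (b c : MatTup d m) (μ : ℂ) : MatTup d (m + m) :=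
  fun r => blk (b r) (μ • (b r - c r)) 0 (c r)

variable {d : ℕ}

theorem f_tri {U : Set (MSpace d)} (hU : IsNCDomain U) {f : ∀ n, MatTup d n → Mat n}
    (hf : IsNCFunctionOn U f) {m : ℕ} {b c : MatTup d m} {μ : ℂ}
    (hb : (⟨m, b⟩ : MSpace d) ∈ U) (hc : (⟨m, c⟩ : MSpace d) ∈ U)
    (hT : (⟨m + m, triTup b c μ⟩ : MSpace d) ∈ U) :
    f (m + m) (triTup b c μ) = blk (f m b) (μ • (f m b - f m c)) 0 (f m c) := by
  set s : Mat (m + m) := blk 1 (μ • (1 : Mat m)) 0 1 with hs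
  have hconj : simConj s (dSum b c) = triTup b c μ := by
    funext r
    show s⁻¹ * (blk (b r) 0 0 (c r)) * s = blk (b r) (μ • (b r - c r)) 0 (c r)
    rw [hs, tri_conj]
  have hd : (⟨m + m, dSum b c⟩ : MSpace d) ∈ U := hU.dsum_mem b c hb hc
  have h1 := hf.sim_eq s (dSum b c) (tri_isUnit μ) hd (by rw [hconj]; exact hT)
  rw [hconj] at h1
  rw [h1, hf.dsum_eq b c hb hc hd, hs, tri_conj]

theorem open_ball {V : Set (MSpace d)} (hV : IsNCDomain V) {m : ℕ} {w : MatTup d m}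
    (hw : (⟨m, w⟩ : MSpace d) ∈ V) :
    ∃ δ > 0, ∀ b : MatTup d m, ‖b - w‖ < δ → (⟨m, b⟩ : MSpace d) ∈ V := by
  obtain ⟨ε, hε, hb⟩ := Metric.isOpen_iff.mp (hV.duOpen m) w hw
  exact ⟨ε, hε, fun b hbw => hb (show dist b w < ε by rwa [dist_eq_norm])⟩

/-- Local Lipschitz bound from local boundedness, via the triangular similarity trick. -/
theorem lip {U Ω : Set (MSpace d)} (hU : IsNCDomain U) (hΩ : IsNCDomain Ω) (hΩU : Ω ⊆ U)
    {f : ∀ n, MatTup d n → Mat n} (hf : IsNCFunctionOn U f) {C : ℝ}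
    (hC : ∀ x ∈ Ω, ‖f x.1 x.2‖ ≤ C) {m : ℕ} {w : MatTup d m}
    (hw : (⟨m, w⟩ : MSpace d) ∈ Ω) :
    ∃ δ : ℝ, 0 < δ ∧ ∃ L : ℝ, 0 ≤ L ∧ ∀ b c : MatTup d m, ‖b - w‖ < δ → ‖c - w‖ < δ →
      ((⟨m, b⟩ : MSpace d) ∈ Ω ∧ ‖f m b - f m c‖ ≤ L * ‖b - c‖) := by
  have hC0 : 0 ≤ C := le_trans (norm_nonneg _) (hC ⟨m, w⟩ hw)
  obtain ⟨δ₀, hδ₀, hball₀⟩ := open_ball hΩ hw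
  have hww : (⟨m + m, dSum w w⟩ : MSpace d) ∈ Ω := hΩ.dsum_mem w w hw hw
  obtain ⟨η, hη, hballη⟩ := open_ball hΩ hww
  set K : ℝ := (((m + m) * (m + m) : ℕ) : ℝ) + 1 with hKdef
  have hK1 : (1 : ℝ) ≤ K := le_add_of_nonneg_left (Nat.cast_nonneg _)
  have hK0 : (0 : ℝ) < K := lt_of_lt_of_le one_pos hK1
  set δ : ℝ := min δ₀ (η / (4 * K)) with hδdef
  have hδpos : 0 < δ := lt_min hδ₀ (by positivity)
  set L : ℝ := ((m * m : ℕ) : ℝ) * (8 * K * C / η) with hLdef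
  have hL0 : 0 ≤ L := by positivity
  refine ⟨δ, hδpos, L, hL0, ?_⟩
  intro b c hbδ hcδ
  have hbΩ : (⟨m, b⟩ : MSpace d) ∈ Ω := hball₀ b (lt_of_lt_of_le hbδ (min_le_left _ _))
  have hcΩ : (⟨m, c⟩ : MSpace d) ∈ Ω := hball₀ c (lt_of_lt_of_le hcδ (min_le_left _ _))
  refine ⟨hbΩ, ?_⟩
  rcases eq_or_ne b c with rfl | hbc
  · simp
  · have hbc0 : (0 : ℝ) < ‖b - c‖ := by
      rw [norm_pos_iff]
      exact sub_ne_zero_of_ne hbc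
    set μ : ℝ := η / (8 * K * ‖b - c‖) with hμdef
    have hμ0 : 0 < μ := by positivity
    have hμbc : μ * ‖b - c‖ = η / (8 * K) := by
      rw [hμdef]; field_simp
    -- the triangular point is in Ω
    have hsnn : (0:ℝ) ≤ ‖b - w‖ + μ * ‖b - c‖ + ‖c - w‖ := by
      have := mul_nonneg (le_of_lt hμ0) (norm_nonneg (b - c))
      linarith [norm_nonneg (b - w), norm_nonneg (c - w)]
    have hmemT : (⟨m + m, triTup b c (μ : ℂ)⟩ : MSpace d) ∈ Ω := by
      apply hballη
      have hcoord : ∀ r, ‖(triTup b c (μ : ℂ) - dSum w w) r‖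
          ≤ K * (‖b - w‖ + μ * ‖b - c‖ + ‖c - w‖) := by
        intro r
        have h1 : (triTup b c (μ : ℂ) - dSum w w) r
            = blk (b r - w r) ((μ : ℂ) • (b r - c r)) 0 (c r - w r) := by
          show blk (b r) ((μ : ℂ) • (b r - c r)) 0 (c r) - blk (w r) 0 0 (w r) = _
          rw [blk_sub]; simp only [sub_zero]
        rw [h1]
        have h2 := norm_blk_le (b r - w r) ((μ : ℂ) • (b r - c r)) 0 (c r - w r)
        have h3 : ‖(μ : ℂ) • (b r - c r)‖ = μ * ‖b r - c r‖ := by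
          rw [norm_smul, Complex.norm_real, Real.norm_eq_abs, abs_of_pos hμ0]
        have h4 : ‖b r - w r‖ ≤ ‖b - w‖ := norm_le_pi_norm (b - w) r
        have h5 : ‖c r - w r‖ ≤ ‖c - w‖ := norm_le_pi_norm (c - w) r
        have h6 : ‖b r - c r‖ ≤ ‖b - c‖ := norm_le_pi_norm (b - c) r
        have h7 : (((m + m) * (m + m) : ℕ) : ℝ) ≤ K := by rw [hKdef]; linarith
        have h8 : ‖blk (b r - w r) ((μ : ℂ) • (b r - c r)) 0 (c r - w r)‖
            ≤ (((m + m) * (m + m) : ℕ) : ℝ)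
              * (‖b - w‖ + μ * ‖b - c‖ + ‖c - w‖) := by
          refine le_trans h2 ?_
          have : ‖b r - w r‖ + ‖(μ : ℂ) • (b r - c r)‖ + ‖(0 : Matrix (Fin m) (Fin m) ℂ)‖
              + ‖c r - w r‖ ≤ ‖b - w‖ + μ * ‖b - c‖ + ‖c - w‖ := by
            rw [norm_zero, h3]
            have := mul_le_mul_of_nonneg_left h6 (le_of_lt hμ0)
            linarith
          exact mul_le_mul_of_nonneg_left this (Nat.cast_nonneg _)
        exact le_trans h8 (mul_le_mul_of_nonneg_right h7 hsnn)
      have hsum : K * (‖b - w‖ + μ * ‖b - c‖ + ‖c - w‖) < η := by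
        have hb' : ‖b - w‖ < η / (4 * K) := lt_of_lt_of_le hbδ (min_le_right _ _)
        have hc' : ‖c - w‖ < η / (4 * K) := lt_of_lt_of_le hcδ (min_le_right _ _)
        rw [hμbc]
        have h48 : η / (8 * K) ≤ η / (4 * K) := by
          apply div_le_div_of_nonneg_left (le_of_lt hη) (by positivity)
          linarith
        have : ‖b - w‖ + η / (8 * K) + ‖c - w‖ < 3 * (η / (4 * K)) := by linarith
        calc K * (‖b - w‖ + η / (8 * K) + ‖c - w‖) < K * (3 * (η / (4 * K))) :=
              mul_lt_mul_of_pos_left this hK0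
        _ = (3 / 4) * η := by field_simp
        _ < η := by linarith
      calc ‖triTup b c (μ : ℂ) - dSum w w‖
          ≤ K * (‖b - w‖ + μ * ‖b - c‖ + ‖c - w‖) :=
            pi_norm_le_iff_of_nonneg (mul_nonneg (le_of_lt hK0) hsnn) |>.mpr hcoord
      _ < η := hsum
    have hfT := f_tri hU hf (hΩU hbΩ) (hΩU hcΩ) (hΩU hmemT)
    have hbound := hC _ hmemT
    rw [hfT] at hbound
    have hent : ∀ i j, ‖(f m b - f m c) i j‖ ≤ C / μ := by
      intro i j
      have h1 : ‖((μ : ℂ) • (f m b - f m c)) i j‖ ≤ C := by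
        calc ‖((μ : ℂ) • (f m b - f m c)) i j‖
            = ‖blk (f m b) ((μ : ℂ) • (f m b - f m c)) 0 (f m c)
                (finSumFinEquiv (Sum.inl i)) (finSumFinEquiv (Sum.inr j))‖ := by
              rw [blk_apply12]
        _ ≤ ‖blk (f m b) ((μ : ℂ) • (f m b - f m c)) 0 (f m c)‖ := entry_le_norm _ _ _
        _ ≤ C := hbound
      have h2 : ‖((μ : ℂ) • (f m b - f m c)) i j‖ = μ * ‖(f m b - f m c) i j‖ := by
        show ‖(μ : ℂ) * (f m b - f m c) i j‖ = _
        rw [norm_mul, Complex.norm_real, Real.norm_eq_abs, abs_of_pos hμ0]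
      rw [h2] at h1
      rw [le_div_iff₀ hμ0]
      linarith [h1]
    have hCμ : C / μ = 8 * K * C / η * ‖b - c‖ := by
      rw [hμdef]; field_simp
    calc ‖f m b - f m c‖ ≤ ∑ i, ∑ j, ‖(f m b - f m c) i j‖ := norm_le_sum_entries _
    _ ≤ ∑ _i : Fin m, ∑ _j : Fin m, C / μ :=
        Finset.sum_le_sum fun i _ => Finset.sum_le_sum fun j _ => hent i j
    _ = ((m * m : ℕ) : ℝ) * (C / μ) := by simp [Finset.sum_const, mul_assoc]
    _ = L * ‖b - c‖ := by rw [hCμ, hLdef]; ring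

end NCAux

end Aux

open BlkAux in
/-- If `f` is fine holomorphic on an nc domain `U`, `a ∈ U ∩ M_n^d`, and the upper
triangular point `[[a,h],[0,a]]` lies in `U`, then the derivative `Df(a)[h]` exists and
`f([[a,h],[0,a]]) = [[f(a), Df(a)[h]],[0, f(a)]]`. -/
theorem fine_holo_block_formula (d n : ℕ) (U : Set (MSpace d)) (hU : IsNCDomain U)
    (f : ∀ m, MatTup d m → Mat m) (hf : IsFineHolo U f)
    (a h : MatTup d n) (ha : (⟨n, a⟩ : MSpace d) ∈ U)
    (hx : (⟨n + n, fun r => blk (a r) (h r) 0 (a r)⟩ : MSpace d) ∈ U) :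
    ∃ D : Mat n,
      Tendsto (fun t : ℂ => t⁻¹ • (f n (a + t • h) - f n a)) (𝓝[≠] 0) (𝓝 D) ∧
      f (n + n) (fun r => blk (a r) (h r) 0 (a r)) = blk (f n a) D 0 (f n a) := by
  classical
  obtain ⟨hfo, hnc, hbd⟩ := hf
  set X : MatTup d (n + n) := fun r => blk (a r) (h r) 0 (a r) with hXdef
  have haa : (⟨n + n, dSum a a⟩ : MSpace d) ∈ U := hU.dsum_mem a a ha ha
  obtain ⟨Ω₁, hΩ₁, haa1, hΩ₁U, C₁, hC₁⟩ := hbd ⟨n + n, dSum a a⟩ haa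
  obtain ⟨δ₁, hδ₁, L₁, hL₁, hlip₁⟩ := NCAux.lip hU hΩ₁ hΩ₁U hnc hC₁ haa1
  obtain ⟨Ω₂, hΩ₂, hX2, hΩ₂U, C₂, hC₂⟩ := hbd ⟨n + n, X⟩ hx
  obtain ⟨δ₂, hδ₂, L₂, hL₂, hlip₂⟩ := NCAux.lip hU hΩ₂ hΩ₂U hnc hC₂ hX2
  obtain ⟨ε₁, hε₁, hball₁⟩ := NCAux.open_ball hU ha
  obtain ⟨P, Q, R, S, hPQRS⟩ : ∃ P Q R S, f (n + n) X = blk P Q R S :=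
    ⟨_, _, _, _, (blk_eq _).symm⟩
  set K : ℝ := (((n + n) * (n + n) : ℕ) : ℝ) + 1 with hKdef
  have hK1 : (1 : ℝ) ≤ K := le_add_of_nonneg_left (Nat.cast_nonneg _)
  have hK0 : (0 : ℝ) < K := lt_of_lt_of_le one_pos hK1
  have hh1 : (0 : ℝ) < ‖h‖ + 1 := by positivity
  -- norm estimate for the perturbed triangular points
  have hblk_norm : ∀ (t : ℂ) (v : MatTup d (n + n)),
      (∀ r, ∃ w : Mat n, (‖w‖ ≤ ‖t‖ * ‖h‖) ∧
        (v r = blk 0 w 0 0 ∨ v r = blk w 0 0 0)) → ‖v‖ ≤ K * ‖t‖ * (‖h‖ + 1) := by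
    intro t v hv
    have hnn : (0:ℝ) ≤ K * ‖t‖ * (‖h‖ + 1) := by positivity
    refine pi_norm_le_iff_of_nonneg hnn |>.mpr fun r => ?_
    obtain ⟨w, hw, hcase⟩ := hv r
    have hwb : ‖w‖ ≤ ‖t‖ * (‖h‖ + 1) := by
      refine le_trans hw ?_
      exact mul_le_mul_of_nonneg_left (by linarith) (norm_nonneg t)
    have hKc : (((n + n) * (n + n) : ℕ) : ℝ) ≤ K := by rw [hKdef]; linarith
    rcases hcase with hc | hc
    · have h2 := norm_blk_le (0 : Mat n) w 0 0
      simp only [norm_zero, add_zero, zero_add] at h2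
      rw [hc]
      calc ‖blk (0 : Mat n) w 0 0‖ ≤ (((n+n)*(n+n) : ℕ) : ℝ) * ‖w‖ := h2
      _ ≤ K * (‖t‖ * (‖h‖ + 1)) :=
          mul_le_mul hKc hwb (norm_nonneg w) (le_of_lt hK0)
      _ = K * ‖t‖ * (‖h‖ + 1) := by ring
    · have h2 := norm_blk_le w (0 : Mat n) 0 0
      simp only [norm_zero, add_zero, zero_add] at h2
      rw [hc]
      calc ‖blk w (0 : Mat n) 0 0‖ ≤ (((n+n)*(n+n) : ℕ) : ℝ) * ‖w‖ := h2
      _ ≤ K * (‖t‖ * (‖h‖ + 1)) :=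
          mul_le_mul hKc hwb (norm_nonneg w) (le_of_lt hK0)
      _ = K * ‖t‖ * (‖h‖ + 1) := by ring
  have hxt_norm : ∀ t : ℂ,
      ‖(fun r => blk (a r) (t • h r) 0 (a r)) - dSum a a‖ ≤ K * ‖t‖ * (‖h‖ + 1) := by
    intro t
    refine hblk_norm t _ fun r => ⟨t • h r, ?_, Or.inl ?_⟩
    · rw [norm_smul]
      exact mul_le_mul_of_nonneg_left (norm_le_pi_norm h r) (norm_nonneg t)
    · show blk (a r) (t • h r) 0 (a r) - blk (a r) 0 0 (a r) = _
      rw [blk_sub]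
      congr 1 <;> simp
  -- Step A: the structure of f at the scaled triangular points
  have stepA : ∀ t : ℂ, t ≠ 0 → K * ‖t‖ * (‖h‖ + 1) < δ₁ →
      f (n+n) (fun r => blk (a r) (t • h r) 0 (a r)) = blk P (t • Q) (t⁻¹ • R) S ∧
      ‖f (n+n) (fun r => blk (a r) (t • h r) 0 (a r)) - blk (f n a) 0 0 (f n a)‖
        ≤ L₁ * (K * ‖t‖ * (‖h‖ + 1)) := by
    intro t ht hsmall
    have hlt : ‖(fun r => blk (a r) (t • h r) 0 (a r)) - dSum a a‖ < δ₁ :=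
      lt_of_le_of_lt (hxt_norm t) hsmall
    have h0δ : ‖dSum a a - dSum a a‖ < δ₁ := by simpa using hδ₁
    obtain ⟨hxtΩ, hxtlip⟩ := hlip₁ _ (dSum a a) hlt h0δ
    have hxtU : (⟨n+n, fun r => blk (a r) (t • h r) 0 (a r)⟩ : MSpace d) ∈ U := hΩ₁U hxtΩ
    have hconj : simConj (blk (1 : Mat n) 0 0 (t • (1 : Mat n))) X
        = fun r => blk (a r) (t • h r) 0 (a r) := by
      funext r
      show (blk (1 : Mat n) 0 0 (t • (1 : Mat n)))⁻¹ * (blk (a r) (h r) 0 (a r))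
          * (blk (1 : Mat n) 0 0 (t • (1 : Mat n))) = blk (a r) (t • h r) 0 (a r)
      rw [diag_conj ht, smul_zero]
    have hsim := hnc.sim_eq _ X (diag_isUnit ht) hx (by rw [hconj]; exact hxtU)
    rw [hconj] at hsim
    have hform : f (n+n) (fun r => blk (a r) (t • h r) 0 (a r)) = blk P (t • Q) (t⁻¹ • R) S := by
      rw [hsim, hPQRS, diag_conj ht]
    refine ⟨hform, ?_⟩
    rw [hnc.dsum_eq a a ha ha haa] at hxtlip
    exact le_trans hxtlip (mul_le_mul_of_nonneg_left (hxt_norm t) hL₁)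
  -- entries of f(X)
  have key : ∀ ε : ℝ, 0 < ε → ε ≤ 1 → ∀ (i j : Fin n),
      ‖(P - f n a) i j‖ ≤ ε ∧ ‖(S - f n a) i j‖ ≤ ε ∧ ‖R i j‖ ≤ ε := by
    intro ε hε hε1 i j
    set M₁ : ℝ := L₁ * K * (‖h‖ + 1) + 1 with hM₁
    have hM₁0 : (0:ℝ) < M₁ := by positivity
    set τ : ℝ := min (min (ε / M₁) ε) (δ₁ / (2 * K * (‖h‖ + 1))) with hτdef
    have hτ0 : 0 < τ := lt_min (lt_min (by positivity) hε) (by positivity)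
    set t : ℂ := (τ : ℂ) with htdef
    have htne : t ≠ 0 := by
      rw [htdef]
      exact_mod_cast ne_of_gt hτ0
    have htnorm : ‖t‖ = τ := by
      rw [htdef, Complex.norm_real, Real.norm_eq_abs, abs_of_pos hτ0]
    have hsmall : K * ‖t‖ * (‖h‖ + 1) < δ₁ := by
      rw [htnorm]
      have hτle : τ ≤ δ₁ / (2 * K * (‖h‖ + 1)) := min_le_right _ _
      calc K * τ * (‖h‖+1) ≤ K * (δ₁ / (2*K*(‖h‖+1))) * (‖h‖+1) :=
            mul_le_mul_of_nonneg_right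
              (mul_le_mul_of_nonneg_left hτle (le_of_lt hK0)) (le_of_lt hh1)
      _ = δ₁ / 2 := by field_simp
      _ < δ₁ := by linarith
    obtain ⟨hform, hbnd⟩ := stepA t htne hsmall
    have hGdef : f (n+n) (fun r => blk (a r) (t • h r) 0 (a r)) - blk (f n a) 0 0 (f n a)
        = blk (P - f n a) (t • Q) (t⁻¹ • R) (S - f n a) := by
      rw [hform, blk_sub]
      congr 1 <;> simp
    have hGnorm : ‖blk (P - f n a) (t • Q) (t⁻¹ • R) (S - f n a)‖ ≤ ε := by
      rw [← hGdef]
      refine le_trans hbnd ?_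
      rw [htnorm]
      have h1 : L₁ * (K * τ * (‖h‖+1)) ≤ M₁ * τ := by
        rw [hM₁]
        nlinarith [hτ0.le, hL₁, hK0.le, hh1.le]
      have h2 : τ ≤ ε / M₁ := le_trans (min_le_left _ _) (min_le_left _ _)
      calc L₁ * (K * τ * (‖h‖+1)) ≤ M₁ * τ := h1
      _ ≤ M₁ * (ε / M₁) := mul_le_mul_of_nonneg_left h2 (le_of_lt hM₁0)
      _ = ε := by field_simp
    refine ⟨?_, ?_, ?_⟩
    · calc ‖(P - f n a) i j‖
          = ‖blk (P - f n a) (t • Q) (t⁻¹ • R) (S - f n a)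
              (finSumFinEquiv (Sum.inl i)) (finSumFinEquiv (Sum.inl j))‖ := by
            rw [blk_apply11]
      _ ≤ ‖blk (P - f n a) (t • Q) (t⁻¹ • R) (S - f n a)‖ := entry_le_norm _ _ _
      _ ≤ ε := hGnorm
    · calc ‖(S - f n a) i j‖
          = ‖blk (P - f n a) (t • Q) (t⁻¹ • R) (S - f n a)
              (finSumFinEquiv (Sum.inr i)) (finSumFinEquiv (Sum.inr j))‖ := by
            rw [blk_apply22]
      _ ≤ ‖blk (P - f n a) (t • Q) (t⁻¹ • R) (S - f n a)‖ := entry_le_norm _ _ _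
      _ ≤ ε := hGnorm
    · have hentry : ‖(t⁻¹ • R) i j‖ ≤ ε := by
        calc ‖(t⁻¹ • R) i j‖
            = ‖blk (P - f n a) (t • Q) (t⁻¹ • R) (S - f n a)
                (finSumFinEquiv (Sum.inr i)) (finSumFinEquiv (Sum.inl j))‖ := by
              rw [blk_apply21]
        _ ≤ ‖blk (P - f n a) (t • Q) (t⁻¹ • R) (S - f n a)‖ := entry_le_norm _ _ _
        _ ≤ ε := hGnorm
      have hRid : ‖R i j‖ = ‖t‖ * ‖(t⁻¹ • R) i j‖ := by
        show ‖R i j‖ = ‖t‖ * ‖t⁻¹ * R i j‖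
        rw [norm_mul, norm_inv, ← mul_assoc, mul_inv_cancel₀ (norm_ne_zero_iff.mpr htne),
          one_mul]
      rw [hRid, htnorm]
      have hτ1 : τ ≤ 1 := le_trans (le_trans (min_le_left _ _) (min_le_right _ _)) hε1
      calc τ * ‖(t⁻¹ • R) i j‖ ≤ τ * ε :=
            mul_le_mul_of_nonneg_left hentry (le_of_lt hτ0)
      _ ≤ 1 * ε := mul_le_mul_of_nonneg_right hτ1 (le_of_lt hε)
      _ = ε := one_mul ε
  have hsmallkey : ∀ (z : Matrix (Fin n) (Fin n) ℂ),
      (∀ (i j : Fin n), (∀ ε : ℝ, 0 < ε → ε ≤ 1 → ‖z i j‖ ≤ ε)) → z = 0 := by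
    intro z hz
    ext i j
    have : z i j = 0 := by
      refine eq_zero_of_norm_le_all fun ε hε => ?_
      rcases le_or_gt ε 1 with hle | hlt
      · exact hz i j ε hε hle
      · exact le_trans (hz i j 1 one_pos le_rfl) (le_of_lt hlt)
    simpa using this
  have hP : P = f n a := by
    have := hsmallkey (P - f n a) fun i j ε hε hε1 => (key ε hε hε1 i j).1
    exact sub_eq_zero.mp this
  have hS : S = f n a := by
    have := hsmallkey (S - f n a) fun i j ε hε hε1 => (key ε hε hε1 i j).2.1
    exact sub_eq_zero.mp this
  have hR : R = 0 := hsmallkey R fun i j ε hε hε1 => (key ε hε hε1 i j).2.2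
  have hFblk : f (n + n) X = blk (f n a) Q 0 (f n a) := by
    rw [hPQRS, hP, hS, hR]
  refine ⟨Q, ?_, hFblk⟩
  -- the difference quotient converges to Q
  rw [Metric.tendsto_nhdsWithin_nhds]
  intro ε hε
  set M₂ : ℝ := ((n * n : ℕ) : ℝ) * L₂ * K * (‖h‖ + 1) + 1 with hM₂
  have hM₂0 : (0:ℝ) < M₂ := by positivity
  refine ⟨min (min (ε₁ / (‖h‖ + 1)) (δ₂ / (K * (‖h‖ + 1)))) (ε / M₂), by positivity, ?_⟩
  intro t htmem hdist
  have htne : t ≠ 0 := htmem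
  have htn : ‖t‖ < min (min (ε₁ / (‖h‖ + 1)) (δ₂ / (K * (‖h‖ + 1)))) (ε / M₂) := by
    rwa [Complex.dist_eq, sub_zero] at hdist
  have htn1 : ‖t‖ * (‖h‖ + 1) < ε₁ := by
    have h1 : ‖t‖ < ε₁ / (‖h‖+1) :=
      lt_of_lt_of_le htn (le_trans (min_le_left _ _) (min_le_left _ _))
    calc ‖t‖ * (‖h‖+1) < (ε₁/(‖h‖+1)) * (‖h‖+1) := mul_lt_mul_of_pos_right h1 hh1
    _ = ε₁ := by field_simp
  have hath : (⟨n, a + t • h⟩ : MSpace d) ∈ U := by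
    apply hball₁
    have he : a + t • h - a = t • h := add_sub_cancel_left a (t • h)
    rw [he, norm_smul]
    calc ‖t‖ * ‖h‖ ≤ ‖t‖ * (‖h‖+1) :=
          mul_le_mul_of_nonneg_left (by linarith) (norm_nonneg t)
    _ < ε₁ := htn1
  have hZnorm : ‖NCAux.triTup (a + t • h) a t⁻¹ - X‖ ≤ K * ‖t‖ * (‖h‖ + 1) := by
    refine hblk_norm t _ fun r => ⟨t • h r, ?_, Or.inr ?_⟩
    · rw [norm_smul]
      exact mul_le_mul_of_nonneg_left (norm_le_pi_norm h r) (norm_nonneg t)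
    · show blk ((a + t • h) r) ((t⁻¹ : ℂ) • ((a + t • h) r - a r)) 0 (a r)
          - blk (a r) (h r) 0 (a r) = blk (t • h r) 0 0 0
      have h1 : (a + t • h) r = a r + t • h r := rfl
      have h2 : (t⁻¹ : ℂ) • ((a + t • h) r - a r) = h r := by
        rw [h1, add_sub_cancel_left, smul_smul, inv_mul_cancel₀ htne, one_smul]
      rw [h2, blk_sub]
      congr 1 <;> simp [h1, add_sub_cancel_left]
  have hZδ₂ : ‖NCAux.triTup (a + t • h) a t⁻¹ - X‖ < δ₂ := by
    refine lt_of_le_of_lt hZnorm ?_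
    have h1 : ‖t‖ < δ₂ / (K * (‖h‖+1)) :=
      lt_of_lt_of_le htn (le_trans (min_le_left _ _) (min_le_right _ _))
    calc K * ‖t‖ * (‖h‖+1) < K * (δ₂ / (K * (‖h‖+1))) * (‖h‖+1) :=
          mul_lt_mul_of_pos_right (mul_lt_mul_of_pos_left h1 hK0) hh1
    _ = δ₂ := by field_simp
  obtain ⟨hZΩ, hZlip⟩ := hlip₂ _ X hZδ₂ (by simpa using hδ₂)
  have hZU : (⟨n+n, NCAux.triTup (a + t • h) a t⁻¹⟩ : MSpace d) ∈ U := hΩ₂U hZΩ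
  have hfZ := NCAux.f_tri hU hnc hath ha hZU
  rw [dist_eq_norm]
  have hdiff : t⁻¹ • (f n (a + t • h) - f n a) - Q
      = blkB (f (n+n) (NCAux.triTup (a + t • h) a t⁻¹) - f (n+n) X) := by
    rw [blkB_sub, hfZ, blkB_blk, hFblk, blkB_blk]
  rw [hdiff]
  have htpos : (0:ℝ) < ‖t‖ := norm_pos_iff.mpr htne
  calc ‖blkB (f (n+n) (NCAux.triTup (a + t • h) a t⁻¹) - f (n+n) X)‖
      ≤ ((n * n : ℕ) : ℝ) * ‖f (n+n) (NCAux.triTup (a + t • h) a t⁻¹) - f (n+n) X‖ :=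
        norm_blkB_le _
  _ ≤ ((n * n : ℕ) : ℝ) * (L₂ * ‖NCAux.triTup (a + t • h) a t⁻¹ - X‖) :=
      mul_le_mul_of_nonneg_left hZlip (Nat.cast_nonneg _)
  _ ≤ ((n * n : ℕ) : ℝ) * (L₂ * (K * ‖t‖ * (‖h‖+1))) :=
      mul_le_mul_of_nonneg_left (mul_le_mul_of_nonneg_left hZnorm hL₂) (Nat.cast_nonneg _)
  _ = (((n * n : ℕ) : ℝ) * L₂ * K * (‖h‖+1)) * ‖t‖ := by ring
  _ < M₂ * ‖t‖ := mul_lt_mul_of_pos_right (by rw [hM₂]; linarith) htpos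
  _ < M₂ * (ε / M₂) :=
      mul_lt_mul_of_pos_left (lt_of_lt_of_le htn (min_le_right _ _)) hM₂0
  _ = ε := by field_simp
end

section
/- Let Ω ⊆ M^d be an nc domain, let f be a fine holomorphic function on Ω, let a ∈ Ω ∩ M_n^d, and let Γ ∈ M_n. Then Df(a)[aΓ − Γa] = f(a)Γ − Γf(a), where aΓ − Γa denotes the d-tuple (a_rΓ − Γa_r)_{r=1}^d. -/
open Matrix Filter Topology
open scoped Matrix.Norms.L2Operator Kronecker

noncomputable section AuxNC
namespace AuxNC

open Matrix

variable {n m : ℕ}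

/-- left selector -/
def lE (n m : ℕ) : Matrix (Fin (n + m)) (Fin n) ℂ :=
  fun p i => if finSumFinEquiv.symm p = Sum.inl i then 1 else 0

/-- right selector -/
def rE (n m : ℕ) : Matrix (Fin (n + m)) (Fin m) ℂ :=
  fun p j => if finSumFinEquiv.symm p = Sum.inr j then 1 else 0

/-- top-right block extraction -/
def TR (M : Matrix (Fin (n + m)) (Fin (n + m)) ℂ) : Matrix (Fin n) (Fin m) ℂ :=
  fun i j => M (finSumFinEquiv (Sum.inl i)) (finSumFinEquiv (Sum.inr j))

lemma blk_apply (A B C D) (p q : Fin (n + m)) :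
    blk A B C D p q = fromBlocks A B C D (finSumFinEquiv.symm p) (finSumFinEquiv.symm q) := rfl

lemma TR_blk (A B C D) : TR (blk A B C D : Mat (n+m)) = B := by
  ext i j
  simp [TR, blk_apply]

lemma TR_sub (M N : Mat (n+m)) : TR (M - N) = TR M - TR N := by
  ext i j; simp [TR]

lemma blk_add (A B C D A' B' C' D') :
    (blk A B C D : Mat (n+m)) + blk A' B' C' D' = blk (A+A') (B+B') (C+C') (D+D') := by
  ext p q
  rcases h : finSumFinEquiv.symm p with i | i <;> rcases h' : finSumFinEquiv.symm q with j | j <;>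
    simp [blk_apply, h, h', fromBlocks]

lemma blk_sub (A B C D A' B' C' D') :
    (blk A B C D : Mat (n+m)) - blk A' B' C' D' = blk (A-A') (B-B') (C-C') (D-D') := by
  ext p q
  rcases h : finSumFinEquiv.symm p with i | i <;> rcases h' : finSumFinEquiv.symm q with j | j <;>
    simp [blk_apply, h, h', fromBlocks]

lemma blk_mul (A B C D A' B' C' D') :
    (blk A B C D : Mat (n+m)) * blk A' B' C' D' =
      blk (A*A' + B*C') (A*B' + B*D') (C*A' + D*C') (C*B' + D*D') := by
  unfold blk
  rw [Matrix.reindex_apply, Matrix.reindex_apply, Matrix.reindex_apply,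
    Matrix.submatrix_mul_equiv, Matrix.fromBlocks_multiply]

lemma blk_one : (blk 1 0 0 1 : Mat (n+m)) = 1 := by
  unfold blk
  rw [Matrix.fromBlocks_one, Matrix.reindex_apply, Matrix.submatrix_one_equiv]


lemma lE_conjT_mul_lE : (lE n m)ᴴ * lE n m = 1 := by
  ext i j
  rw [Matrix.mul_apply]
  rw [Fintype.sum_equiv finSumFinEquiv.symm (fun p => (lE n m)ᴴ i p * lE n m p j)
    (fun s => (if s = Sum.inl i then 1 else 0) * (if s = Sum.inl j then 1 else 0))
    (fun p => by simp [lE, Matrix.conjTranspose_apply, apply_ite (star (R := ℂ))])]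
  simp [Finset.sum_ite_eq', Matrix.one_apply, eq_comm]

lemma rE_conjT_mul_rE : (rE n m)ᴴ * rE n m = 1 := by
  ext i j
  rw [Matrix.mul_apply]
  rw [Fintype.sum_equiv finSumFinEquiv.symm (fun p => (rE n m)ᴴ i p * rE n m p j)
    (fun s => (if s = Sum.inr i then 1 else 0) * (if s = Sum.inr j then 1 else 0))
    (fun p => by simp [rE, Matrix.conjTranspose_apply, apply_ite (star (R := ℂ))])]
  simp [Finset.sum_ite_eq', Matrix.one_apply, eq_comm]

lemma norm_one_le (k : ℕ) : ‖(1 : Mat k)‖ ≤ 1 := by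
  have h := Matrix.l2_opNorm_conjTranspose_mul_self (1 : Mat k)
  rw [Matrix.conjTranspose_one, mul_one] at h
  nlinarith [norm_nonneg (1 : Mat k)]

lemma norm_lE_le : ‖lE n m‖ ≤ 1 := by
  have h := Matrix.l2_opNorm_conjTranspose_mul_self (lE n m)
  rw [lE_conjT_mul_lE] at h
  nlinarith [norm_nonneg (lE n m), norm_one_le n]

lemma norm_rE_le : ‖rE n m‖ ≤ 1 := by
  have h := Matrix.l2_opNorm_conjTranspose_mul_self (rE n m)
  rw [rE_conjT_mul_rE] at h
  nlinarith [norm_nonneg (rE n m), norm_one_le m]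

lemma TR_eq (M : Mat (n + m)) : TR M = (lE n m)ᴴ * M * rE n m := by
  ext i j
  rw [Matrix.mul_apply]
  have : ∀ q, ((lE n m)ᴴ * M) i q * rE n m q j
      = if q = finSumFinEquiv (Sum.inr j) then ((lE n m)ᴴ * M) i q else 0 := by
    intro q
    simp only [rE, mul_ite, mul_one, mul_zero]
    congr 1
    exact propext (Equiv.symm_apply_eq _)
  rw [Finset.sum_congr rfl (fun q _ => this q), Finset.sum_ite_eq']
  simp only [Finset.mem_univ, if_true]
  rw [Matrix.mul_apply]
  have h2 : ∀ p, (lE n m)ᴴ i p * M p (finSumFinEquiv (Sum.inr j))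
      = if p = finSumFinEquiv (Sum.inl i) then M p (finSumFinEquiv (Sum.inr j)) else 0 := by
    intro p
    simp only [lE, Matrix.conjTranspose_apply, apply_ite (star (R := ℂ)), star_one, star_zero,
      ite_mul, one_mul, zero_mul]
    congr 1
    exact propext (Equiv.symm_apply_eq _)
  rw [Finset.sum_congr rfl (fun p _ => h2 p), Finset.sum_ite_eq']
  simp [TR]

lemma norm_TR_le (M : Mat (n + m)) : ‖TR M‖ ≤ ‖M‖ := by
  rw [TR_eq]
  calc ‖(lE n m)ᴴ * M * rE n m‖ ≤ ‖(lE n m)ᴴ * M‖ * ‖rE n m‖ := Matrix.l2_opNorm_mul _ _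
    _ ≤ ‖(lE n m)ᴴ‖ * ‖M‖ * ‖rE n m‖ := by
        have := Matrix.l2_opNorm_mul (lE n m)ᴴ M
        have h1 : (0:ℝ) ≤ ‖rE n m‖ := norm_nonneg _
        nlinarith
    _ ≤ ‖M‖ := by
        rw [Matrix.l2_opNorm_conjTranspose]
        have h1 := norm_lE_le (n := n) (m := m)
        have h2 := norm_rE_le (n := n) (m := m)
        have h3 : (0:ℝ) ≤ ‖M‖ := norm_nonneg _
        have h4 : (0:ℝ) ≤ ‖lE n m‖ := norm_nonneg _
        have h5 : (0:ℝ) ≤ ‖rE n m‖ := norm_nonneg _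
        have t1 : ‖lE n m‖ * ‖M‖ ≤ ‖M‖ := by nlinarith
        calc ‖lE n m‖ * ‖M‖ * ‖rE n m‖ ≤ ‖M‖ * ‖rE n m‖ := mul_le_mul_of_nonneg_right t1 h5
          _ ≤ ‖M‖ * 1 := mul_le_mul_of_nonneg_left h2 h3
          _ = ‖M‖ := mul_one _


lemma blk_eq_sum (A B C D) : (blk A B C D : Mat (n+m)) =
    lE n m * A * (lE n m)ᴴ + lE n m * B * (rE n m)ᴴ +
    rE n m * C * (lE n m)ᴴ + rE n m * D * (rE n m)ᴴ := by
  ext p q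
  rcases h : finSumFinEquiv.symm p with i | i <;> rcases h' : finSumFinEquiv.symm q with j | j <;>
    simp [blk_apply, h, h', fromBlocks, Matrix.mul_apply, lE, rE, Matrix.conjTranspose_apply,
      apply_ite (star (R := ℂ)), ite_mul, mul_ite, Finset.sum_ite_eq, Finset.sum_ite_eq', eq_comm]

lemma norm_triple {k l : ℕ} (P : Matrix (Fin (n+m)) (Fin k) ℂ) (X : Matrix (Fin k) (Fin l) ℂ)
    (R : Matrix (Fin l) (Fin (n+m)) ℂ) (hP : ‖P‖ ≤ 1) (hR : ‖R‖ ≤ 1) :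
    ‖P * X * R‖ ≤ ‖X‖ := by
  have h1 := Matrix.l2_opNorm_mul (P * X) R
  have h2 := Matrix.l2_opNorm_mul P X
  have h3 : (0:ℝ) ≤ ‖X‖ := norm_nonneg _
  have h4 : (0:ℝ) ≤ ‖P‖ := norm_nonneg _
  have h5 : (0:ℝ) ≤ ‖R‖ := norm_nonneg _
  have h6 : (0:ℝ) ≤ ‖P * X‖ := norm_nonneg _
  nlinarith

lemma norm_blk_le (A B C D) : ‖(blk A B C D : Mat (n+m))‖ ≤ ‖A‖ + ‖B‖ + ‖C‖ + ‖D‖ := by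
  rw [blk_eq_sum]
  have hlE := norm_lE_le (n := n) (m := m)
  have hrE := norm_rE_le (n := n) (m := m)
  have hlEH : ‖(lE n m)ᴴ‖ ≤ 1 := by rw [Matrix.l2_opNorm_conjTranspose]; exact hlE
  have hrEH : ‖(rE n m)ᴴ‖ ≤ 1 := by rw [Matrix.l2_opNorm_conjTranspose]; exact hrE
  have t1 := norm_triple (lE n m) A (lE n m)ᴴ hlE hlEH
  have t2 := norm_triple (lE n m) B (rE n m)ᴴ hlE hrEH
  have t3 := norm_triple (rE n m) C (lE n m)ᴴ hrE hlEH
  have t4 := norm_triple (rE n m) D (rE n m)ᴴ hrE hrEH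
  calc ‖lE n m * A * (lE n m)ᴴ + lE n m * B * (rE n m)ᴴ +
      rE n m * C * (lE n m)ᴴ + rE n m * D * (rE n m)ᴴ‖
      ≤ ‖lE n m * A * (lE n m)ᴴ + lE n m * B * (rE n m)ᴴ + rE n m * C * (lE n m)ᴴ‖
        + ‖rE n m * D * (rE n m)ᴴ‖ := norm_add_le _ _
    _ ≤ ‖lE n m * A * (lE n m)ᴴ + lE n m * B * (rE n m)ᴴ‖ + ‖rE n m * C * (lE n m)ᴴ‖
        + ‖rE n m * D * (rE n m)ᴴ‖ := by gcongr; exact norm_add_le _ _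
    _ ≤ ‖lE n m * A * (lE n m)ᴴ‖ + ‖lE n m * B * (rE n m)ᴴ‖ + ‖rE n m * C * (lE n m)ᴴ‖
        + ‖rE n m * D * (rE n m)ᴴ‖ := by gcongr; exact norm_add_le _ _
    _ ≤ ‖A‖ + ‖B‖ + ‖C‖ + ‖D‖ := by gcongr


def TL (M : Matrix (Fin (n+m)) (Fin (n+m)) ℂ) : Matrix (Fin n) (Fin n) ℂ :=
  fun i j => M (finSumFinEquiv (Sum.inl i)) (finSumFinEquiv (Sum.inl j))

def BL (M : Matrix (Fin (n+m)) (Fin (n+m)) ℂ) : Matrix (Fin m) (Fin n) ℂ :=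
  fun i j => M (finSumFinEquiv (Sum.inr i)) (finSumFinEquiv (Sum.inl j))

def BR (M : Matrix (Fin (n+m)) (Fin (n+m)) ℂ) : Matrix (Fin m) (Fin m) ℂ :=
  fun i j => M (finSumFinEquiv (Sum.inr i)) (finSumFinEquiv (Sum.inr j))

lemma blk_eta (M : Mat (n+m)) : blk (TL M) (TR M) (BL M) (BR M) = M := by
  ext p q
  rcases h : finSumFinEquiv.symm p with i | i <;> rcases h' : finSumFinEquiv.symm q with j | j <;>
    obtain rfl : p = _ := (Equiv.symm_apply_eq _).mp h <;>
    obtain rfl : q = _ := (Equiv.symm_apply_eq _).mp h' <;>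
    simp [blk_apply, TL, TR, BL, BR, fromBlocks]

/-- diagonal scaling similarity -/
def sD (t : ℂ) (n m : ℕ) : Mat (n+m) := blk 1 0 0 (t • 1)

lemma sD_mul_sD (t s : ℂ) : sD t n m * sD s n m = sD (t*s) n m := by
  unfold sD
  rw [blk_mul]
  simp [Matrix.smul_mul, Matrix.mul_smul, smul_smul, mul_comm]

lemma sD_one : sD 1 n m = 1 := by
  unfold sD; rw [one_smul, blk_one]

lemma sD_inv (t : ℂ) (ht : t ≠ 0) : (sD t n m)⁻¹ = sD t⁻¹ n m := by
  apply Matrix.inv_eq_right_inv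
  rw [sD_mul_sD, mul_inv_cancel₀ ht, sD_one]

lemma isUnit_sD (t : ℂ) (ht : t ≠ 0) : IsUnit (sD t n m) := by
  refine ⟨⟨sD t n m, sD t⁻¹ n m, ?_, ?_⟩, rfl⟩
  · rw [sD_mul_sD, mul_inv_cancel₀ ht, sD_one]
  · rw [sD_mul_sD, inv_mul_cancel₀ ht, sD_one]

lemma sG_inv (G : Matrix (Fin n) (Fin m) ℂ) : (blk 1 G 0 1 : Mat (n+m))⁻¹ = blk 1 (-G) 0 1 := by
  apply Matrix.inv_eq_right_inv
  rw [blk_mul]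
  simp [blk_one]

lemma isUnit_sG (G : Matrix (Fin n) (Fin m) ℂ) : IsUnit (blk 1 G 0 1 : Mat (n+m)) := by
  refine ⟨⟨blk 1 G 0 1, blk 1 (-G) 0 1, ?_, ?_⟩, rfl⟩ <;>
  · rw [blk_mul]; simp [blk_one]

lemma TR_sD_conj (t : ℂ) (M : Mat (n+m)) :
    TR (sD t⁻¹ n m * M * sD t n m) = t • TR M := by
  conv_lhs => rw [← blk_eta M]
  unfold sD
  rw [blk_mul, blk_mul, TR_blk]
  simp [Matrix.mul_smul]

section Tuples

variable {d : ℕ}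

/-- upper triangular tuple -/
def Xp {n : ℕ} (x y k : MatTup d n) : MatTup d (n+n) := fun r => blk (x r) (k r) 0 (y r)

lemma dSum_eq_Xp {n : ℕ} (x y : MatTup d n) : dSum x y = Xp x y 0 := by
  funext r; simp [dSum, Xp]

lemma Xp_sub {n : ℕ} (x y k x' y' k' : MatTup d n) :
    Xp x y k - Xp x' y' k' = Xp (x-x') (y-y') (k-k') := by
  funext r
  simp only [Pi.sub_apply, Xp, blk_sub, sub_zero]

lemma norm_Xp_le {n : ℕ} (x y k : MatTup d n) : ‖Xp x y k‖ ≤ ‖x‖ + ‖y‖ + ‖k‖ := by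
  have hnn : (0:ℝ) ≤ ‖x‖ + ‖y‖ + ‖k‖ := by positivity
  rw [pi_norm_le_iff_of_nonneg hnn]
  intro r
  calc ‖blk (x r) (k r) 0 (y r)‖ ≤ ‖x r‖ + ‖k r‖ + ‖(0 : Matrix (Fin n) (Fin n) ℂ)‖ + ‖y r‖ :=
        norm_blk_le _ _ _ _
    _ ≤ ‖x‖ + ‖y‖ + ‖k‖ := by
        have h1 := norm_le_pi_norm x r
        have h2 := norm_le_pi_norm y r
        have h3 := norm_le_pi_norm k r
        simp only [norm_zero]
        linarith

lemma simConj_sG {n : ℕ} (G : Mat n) (x y : MatTup d n) :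
    simConj (blk 1 G 0 1) (dSum x y) = Xp x y (fun r => x r * G - G * y r) := by
  funext r
  simp only [simConj, dSum, Xp, sG_inv, blk_mul, one_mul, mul_one, mul_zero, zero_mul,
    add_zero, zero_add, neg_mul, neg_zero, ← sub_eq_add_neg, zero_sub]

lemma simConj_sD {n : ℕ} (t : ℂ) (ht : t ≠ 0) (x y k : MatTup d n) :
    simConj (sD t n n) (Xp x y k) = Xp x y (t • k) := by
  funext r
  simp only [simConj, Xp, sD_inv t ht]
  unfold sD
  rw [blk_mul, blk_mul]
  simp only [Pi.smul_apply, one_mul, mul_one, mul_zero, zero_mul, add_zero, zero_add,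
    Matrix.mul_smul, Matrix.smul_mul, smul_smul, inv_mul_cancel₀ ht, mul_inv_cancel₀ ht, one_smul]

end Tuples

section NCFun

variable {d : ℕ} {Ω : Set (MSpace d)} {f : ∀ m, MatTup d m → Mat m}
  (hnc : IsNCFunctionOn Ω f)

include hnc

lemma f_Xp_sim {n : ℕ} (x y : MatTup d n) (G : Mat n)
    (hx : (⟨n, x⟩ : MSpace d) ∈ Ω) (hy : (⟨n, y⟩ : MSpace d) ∈ Ω)
    (hxy : (⟨n + n, dSum x y⟩ : MSpace d) ∈ Ω)
    (hX : (⟨n + n, Xp x y (fun r => x r * G - G * y r)⟩ : MSpace d) ∈ Ω) :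
    f (n+n) (Xp x y (fun r => x r * G - G * y r)) =
      blk (f n x) (f n x * G - G * f n y) 0 (f n y) := by
  rw [← simConj_sG G x y] at hX ⊢
  rw [hnc.sim_eq _ _ (isUnit_sG G) hxy hX, hnc.dsum_eq x y hx hy hxy, sG_inv, blk_mul, blk_mul]
  simp only [one_mul, mul_one, mul_zero, zero_mul, add_zero, zero_add, neg_mul, neg_zero,
    ← sub_eq_add_neg, zero_sub]

lemma TR_f_Xp_sim {n : ℕ} (x y : MatTup d n) (G : Mat n)
    (hx : (⟨n, x⟩ : MSpace d) ∈ Ω) (hy : (⟨n, y⟩ : MSpace d) ∈ Ω)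
    (hxy : (⟨n + n, dSum x y⟩ : MSpace d) ∈ Ω)
    (hX : (⟨n + n, Xp x y (fun r => x r * G - G * y r)⟩ : MSpace d) ∈ Ω) :
    TR (f (n+n) (Xp x y (fun r => x r * G - G * y r))) = f n x * G - G * f n y := by
  rw [f_Xp_sim hnc x y G hx hy hxy hX, TR_blk]

lemma TR_f_Xp_scale {n : ℕ} (x y k : MatTup d n) (t : ℂ) (ht : t ≠ 0)
    (hX : (⟨n + n, Xp x y k⟩ : MSpace d) ∈ Ω)
    (hX' : (⟨n + n, Xp x y (t • k)⟩ : MSpace d) ∈ Ω) :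
    TR (f (n+n) (Xp x y (t • k))) = t • TR (f (n+n) (Xp x y k)) := by
  rw [← simConj_sD t ht x y k] at hX' ⊢
  rw [hnc.sim_eq _ _ (isUnit_sD t ht) hX hX', sD_inv t ht, TR_sD_conj]


omit hnc in
lemma commG_smul {m : ℕ} (t : ℂ) (A B : Mat m) :
    A * (t • 1) - (t • 1) * B = t • (A - B) := by
  rw [Matrix.mul_smul, mul_one, Matrix.smul_mul, one_mul, smul_sub]

omit hnc in
lemma norm_real_smul {E : Type*} [NormedAddCommGroup E] [NormedSpace ℂ E] (t : ℝ) (ht : 0 ≤ t)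
    (w : E) : ‖(t : ℂ) • w‖ = t * ‖w‖ := by
  rw [norm_smul, Complex.norm_real, Real.norm_eq_abs, abs_of_nonneg ht]

lemma lip {m : ℕ} {Ω'' : Set (MSpace d)} (hsub : Ω'' ⊆ Ω) {C : ℝ}
    (hC : ∀ x ∈ Ω'', ‖f x.1 x.2‖ ≤ C) (b : MatTup d m) {ε : ℝ} (hε : 0 < ε)
    (hb2 : ∀ z : MatTup d (m+m), ‖z - dSum b b‖ < ε → (⟨m+m, z⟩ : MSpace d) ∈ Ω'')
    (u v : MatTup d m) (hu : (⟨m, u⟩ : MSpace d) ∈ Ω'') (hv : (⟨m, v⟩ : MSpace d) ∈ Ω'')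
    (hud : ‖u - b‖ ≤ ε/4) (hvd : ‖v - b‖ ≤ ε/4) :
    ‖f m u - f m v‖ ≤ 4*C/ε * ‖u - v‖ := by
  by_cases huv : u = v
  · subst huv
    simp only [sub_self, norm_zero, mul_zero, le_refl]
  have hN : 0 < ‖u - v‖ := by
    rw [norm_pos_iff]; exact sub_ne_zero_of_ne huv
  set t : ℝ := ε / (4 * ‖u - v‖) with hts
  have htpos : 0 < t := by positivity
  set G : Mat m := (t : ℂ) • 1 with hG
  have hk : (fun r => u r * G - G * v r) = (t : ℂ) • (u - v) := by
    funext r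
    rw [hG, commG_smul, Pi.smul_apply, Pi.sub_apply]
  have hnk : ‖(t : ℂ) • (u - v)‖ = ε / 4 := by
    rw [norm_real_smul t htpos.le, hts]
    field_simp
  have hdm : (⟨m + m, dSum u v⟩ : MSpace d) ∈ Ω'' := by
    apply hb2
    rw [dSum_eq_Xp, dSum_eq_Xp, Xp_sub, sub_self]
    calc ‖Xp (u-b) (v-b) (0 : MatTup d m)‖ ≤ ‖u-b‖ + ‖v-b‖ + ‖(0 : MatTup d m)‖ := norm_Xp_le _ _ _
      _ < ε := by rw [norm_zero]; linarith
  have hXm : (⟨m + m, Xp u v (fun r => u r * G - G * v r)⟩ : MSpace d) ∈ Ω'' := by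
    apply hb2
    rw [dSum_eq_Xp, hk, Xp_sub, sub_zero]
    calc ‖Xp (u-b) (v-b) ((t:ℂ) • (u - v))‖ ≤ ‖u-b‖ + ‖v-b‖ + ‖(t:ℂ) • (u-v)‖ := norm_Xp_le _ _ _
      _ < ε := by rw [hnk]; linarith
  have hTR := TR_f_Xp_sim hnc u v G (hsub hu) (hsub hv) (hsub hdm) (hsub hXm)
  rw [hG, commG_smul] at hTR
  have hbound : ‖TR (f (m+m) (Xp u v (fun r => u r * G - G * v r)))‖ ≤ C := by
    refine le_trans (norm_TR_le _) ?_
    exact hC ⟨m+m, Xp u v (fun r => u r * G - G * v r)⟩ hXm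
  rw [hTR, norm_real_smul t htpos.le] at hbound
  rw [hts, div_mul_eq_mul_div, div_le_iff₀ (by positivity : (0:ℝ) < 4 * ‖u - v‖)] at hbound
  rw [div_mul_eq_mul_div, le_div_iff₀ hε]
  nlinarith

end NCFun

end AuxNC
end AuxNC
open AuxNC

set_option maxHeartbeats 4000000

/-- For a fine holomorphic function `f` on an nc domain `Ω`, the derivative in the
direction `aΓ - Γa` is `f(a)Γ - Γf(a)`. -/
theorem deriv_commutator (d n : ℕ) (Ω : Set (MSpace d)) (hΩ : IsNCDomain Ω)
    (f : ∀ m, MatTup d m → Mat m) (hf : IsFineHolo Ω f)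
    (a : MatTup d n) (ha : (⟨n, a⟩ : MSpace d) ∈ Ω) (Γ : Mat n) :
    fderiv ℂ (f n) a (fun r => a r * Γ - Γ * a r) = f n a * Γ - Γ * f n a := by
  classical
  obtain ⟨hfine, hnc, hlb⟩ := hf
  obtain ⟨Ω'', hΩ'', haΩ'', hsubΩ, C, hC⟩ := hlb ⟨n, a⟩ ha
  have hC0 : 0 ≤ C := le_trans (norm_nonneg _) (hC ⟨n, a⟩ haΩ'')
  set a2 : MatTup d (n+n) := dSum a a with ha2
  have ha2m : (⟨n+n, a2⟩ : MSpace d) ∈ Ω'' := hΩ''.dsum_mem a a haΩ'' haΩ''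
  have ha4m : (⟨(n+n)+(n+n), dSum a2 a2⟩ : MSpace d) ∈ Ω'' := hΩ''.dsum_mem a2 a2 ha2m ha2m
  obtain ⟨ε₁, hε₁, hb1⟩ := Metric.isOpen_iff.mp (hΩ''.duOpen n) a haΩ''
  obtain ⟨ε₂, hε₂, hb2⟩ := Metric.isOpen_iff.mp (hΩ''.duOpen (n+n)) a2 ha2m
  obtain ⟨ε₃, hε₃, hb3⟩ := Metric.isOpen_iff.mp (hΩ''.duOpen ((n+n)+(n+n))) (dSum a2 a2) ha4m
  set ε : ℝ := min ε₁ (min ε₂ ε₃) with hεdef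
  have hε : 0 < ε := lt_min hε₁ (lt_min hε₂ hε₃)
  have hB1 : ∀ u : MatTup d n, ‖u - a‖ < ε → (⟨n, u⟩ : MSpace d) ∈ Ω'' := by
    intro u hu
    apply hb1
    rw [Metric.mem_ball, dist_eq_norm]
    exact lt_of_lt_of_le hu (min_le_left _ _)
  have hB2 : ∀ z : MatTup d (n+n), ‖z - a2‖ < ε → (⟨n+n, z⟩ : MSpace d) ∈ Ω'' := by
    intro z hz
    apply hb2
    rw [Metric.mem_ball, dist_eq_norm]
    exact lt_of_lt_of_le hz (le_trans (min_le_right _ _) (min_le_left _ _))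
  have hB4 : ∀ z : MatTup d ((n+n)+(n+n)), ‖z - dSum a2 a2‖ < ε →
      (⟨(n+n)+(n+n), z⟩ : MSpace d) ∈ Ω'' := by
    intro z hz
    apply hb3
    rw [Metric.mem_ball, dist_eq_norm]
    exact lt_of_lt_of_le hz (le_trans (min_le_right _ _) (min_le_right _ _))
  set K : ℝ := 4*C/ε with hKdef
  have hK0 : 0 ≤ K := by positivity
  -- Lipschitz estimate for f at level 2n near a ⊕ a
  have lip2 : ∀ u v : MatTup d (n+n), ‖u - a2‖ ≤ ε/4 → ‖v - a2‖ ≤ ε/4 →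
      ‖f (n+n) u - f (n+n) v‖ ≤ K * ‖u - v‖ := by
    intro u v hu hv
    exact AuxNC.lip hnc hsubΩ hC a2 hε hB4 u v
      (hB2 u (lt_of_le_of_lt hu (by linarith))) (hB2 v (lt_of_le_of_lt hv (by linarith))) hu hv
  -- membership of pinched points
  have hXmem : ∀ x y k : MatTup d n, ‖x - a‖ + ‖y - a‖ + ‖k‖ < ε →
      (⟨n+n, Xp x y k⟩ : MSpace d) ∈ Ω'' := by
    intro x y k hxyk
    apply hB2
    rw [ha2, dSum_eq_Xp, Xp_sub]
    calc ‖Xp (x-a) (y-a) (k-0)‖ ≤ ‖x-a‖ + ‖y-a‖ + ‖k-0‖ := norm_Xp_le _ _ _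
      _ < ε := by rw [sub_zero]; exact hxyk
  have hXnorm : ∀ x y k : MatTup d n, ‖Xp x y k - a2‖ ≤ ‖x - a‖ + ‖y - a‖ + ‖k‖ := by
    intro x y k
    rw [ha2, dSum_eq_Xp, Xp_sub]
    calc ‖Xp (x-a) (y-a) (k-0)‖ ≤ ‖x-a‖ + ‖y-a‖ + ‖k-0‖ := norm_Xp_le _ _ _
      _ = ‖x - a‖ + ‖y - a‖ + ‖k‖ := by rw [sub_zero]
  set F : MatTup d n → MatTup d n → MatTup d n → Mat n :=
    fun x y k => AuxNC.TR (f (n+n) (Xp x y k)) with hFdef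
  -- P3 : Lipschitz property of F
  have hP3 : ∀ x y k x' y' k' : MatTup d n,
      ‖x - a‖ + ‖y - a‖ + ‖k‖ ≤ ε/4 → ‖x' - a‖ + ‖y' - a‖ + ‖k'‖ ≤ ε/4 →
      ‖F x y k - F x' y' k'‖ ≤ K * (‖x - x'‖ + ‖y - y'‖ + ‖k - k'‖) := by
    intro x y k x' y' k' h1 h2
    rw [hFdef]
    simp only
    rw [← AuxNC.TR_sub]
    refine le_trans (AuxNC.norm_TR_le _) ?_
    refine le_trans (lip2 _ _ (le_trans (hXnorm x y k) h1)
      (le_trans (hXnorm x' y' k') h2)) ?_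
    refine mul_le_mul_of_nonneg_left ?_ hK0
    rw [Xp_sub]
    exact norm_Xp_le _ _ _
  -- F (x,y,0) = 0
  have hFzero : ∀ x y : MatTup d n, ‖x - a‖ ≤ ε/4 → ‖y - a‖ ≤ ε/4 → F x y 0 = 0 := by
    intro x y hx hy
    have hx' : (⟨n, x⟩ : MSpace d) ∈ Ω'' := hB1 x (by linarith)
    have hy' : (⟨n, y⟩ : MSpace d) ∈ Ω'' := hB1 y (by linarith)
    have hxy : (⟨n+n, dSum x y⟩ : MSpace d) ∈ Ω'' := by
      rw [dSum_eq_Xp]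
      exact hXmem x y 0 (by rw [norm_zero]; linarith)
    rw [hFdef]
    simp only
    rw [← dSum_eq_Xp, hnc.dsum_eq x y (hsubΩ hx') (hsubΩ hy') (hsubΩ hxy), AuxNC.TR_blk]
  -- P2 : homogeneity of F in the third slot
  have hP2 : ∀ x y k : MatTup d n, ‖x - a‖ + ‖y - a‖ + ‖k‖ ≤ ε/4 →
      ∀ t : ℂ, ‖t‖ ≤ 1 → F x y (t • k) = t • F x y k := by
    intro x y k hd t ht
    have hxa : ‖x - a‖ ≤ ε/4 := by
      have := norm_nonneg (y - a); have := norm_nonneg k; linarith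
    have hya : ‖y - a‖ ≤ ε/4 := by
      have := norm_nonneg (x - a); have := norm_nonneg k; linarith
    by_cases ht0 : t = 0
    · subst ht0
      rw [zero_smul, zero_smul, hFzero x y hxa hya]
    have hX : (⟨n+n, Xp x y k⟩ : MSpace d) ∈ Ω'' := hXmem x y k (by linarith)
    have hX' : (⟨n+n, Xp x y (t • k)⟩ : MSpace d) ∈ Ω'' := by
      apply hXmem
      have : ‖t • k‖ ≤ ‖k‖ := by
        rw [norm_smul]
        nlinarith [norm_nonneg k]
      linarith
    exact AuxNC.TR_f_Xp_scale hnc x y k t ht0 (hsubΩ hX) (hsubΩ hX')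
  -- P1 : difference formula
  have hP1 : ∀ x y : MatTup d n, ‖x - a‖ ≤ ε/16 → ‖y - a‖ ≤ ε/16 →
      F x y (x - y) = f n x - f n y := by
    intro x y hx hy
    have hg : (fun r => x r * (1 : Mat n) - (1 : Mat n) * y r) = x - y := by
      funext r; simp
    have hxm : (⟨n, x⟩ : MSpace d) ∈ Ω'' := hB1 x (by linarith)
    have hym : (⟨n, y⟩ : MSpace d) ∈ Ω'' := hB1 y (by linarith)
    have hxy : (⟨n+n, dSum x y⟩ : MSpace d) ∈ Ω'' := by
      rw [dSum_eq_Xp]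
      exact hXmem x y 0 (by rw [norm_zero]; linarith)
    have hX : (⟨n+n, Xp x y (x - y)⟩ : MSpace d) ∈ Ω'' := by
      apply hXmem
      have : ‖x - y‖ ≤ ‖x - a‖ + ‖y - a‖ := by
        calc ‖x - y‖ = ‖(x - a) - (y - a)‖ := by abel_nf
          _ ≤ ‖x - a‖ + ‖y - a‖ := norm_sub_le _ _
      linarith
    rw [← hg] at hX
    have hsim := AuxNC.TR_f_Xp_sim hnc x y 1 (hsubΩ hxm) (hsubΩ hym) (hsubΩ hxy) (hsubΩ hX)
    rw [hg] at hsim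
    rw [hFdef]
    simp only
    rw [hsim, mul_one, one_mul]
  -- P4 : second-order estimate
  set K4 : ℝ := 32 * K / ε with hK4def
  have hK40 : 0 ≤ K4 := by positivity
  have hP4 : ∀ x y x' y' k : MatTup d n, ‖x - a‖ ≤ ε/32 → ‖y - a‖ ≤ ε/32 →
      ‖x' - a‖ ≤ ε/32 → ‖y' - a‖ ≤ ε/32 → ‖k‖ ≤ ε/32 →
      ‖F x y k - F x' y' k‖ ≤ K4 * ‖k‖ * (‖x - x'‖ + ‖y - y'‖) := by
    intro x y x' y' k hx hy hx' hy' hk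
    by_cases hk0 : k = 0
    · subst hk0
      rw [hFzero x y (by linarith) (by linarith), hFzero x' y' (by linarith) (by linarith)]
      rw [sub_self, norm_zero]
      positivity
    have hkn : 0 < ‖k‖ := norm_pos_iff.mpr hk0
    set t : ℝ := 32 * ‖k‖ / ε with htdef
    have htpos : 0 < t := by
      rw [htdef]
      exact div_pos (by nlinarith) hε
    have ht1 : t ≤ 1 := by
      rw [htdef, div_le_one hε]; linarith
    set k' : MatTup d n := ((t : ℂ))⁻¹ • k with hk'def
    have htne : (t : ℂ) ≠ 0 := by
      simp only [ne_eq, Complex.ofReal_eq_zero]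
      exact ne_of_gt htpos
    have hkk' : k = (t : ℂ) • k' := by
      rw [hk'def, smul_inv_smul₀ htne]
    have hk'n : ‖k'‖ = ε/32 := by
      rw [hk'def, norm_smul, norm_inv, Complex.norm_real, Real.norm_eq_abs,
        abs_of_pos htpos, htdef]
      field_simp
    have hnt : ‖(t : ℂ)‖ ≤ 1 := by
      rw [Complex.norm_real, Real.norm_eq_abs, abs_of_pos htpos]; exact ht1
    have hd1 : ‖x - a‖ + ‖y - a‖ + ‖k'‖ ≤ ε/4 := by rw [hk'n]; linarith
    have hd2 : ‖x' - a‖ + ‖y' - a‖ + ‖k'‖ ≤ ε/4 := by rw [hk'n]; linarith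
    have e1 : F x y k = (t : ℂ) • F x y k' := by
      conv_lhs => rw [hkk']
      exact hP2 x y k' hd1 _ hnt
    have e2 : F x' y' k = (t : ℂ) • F x' y' k' := by
      conv_lhs => rw [hkk']
      exact hP2 x' y' k' hd2 _ hnt
    rw [e1, e2, ← smul_sub, AuxNC.norm_real_smul t htpos.le]
    have h3 := hP3 x y k' x' y' k' hd1 hd2
    rw [sub_self, norm_zero, add_zero] at h3
    calc t * ‖F x y k' - F x' y' k'‖ ≤ t * (K * (‖x - x'‖ + ‖y - y'‖)) :=
          mul_le_mul_of_nonneg_left h3 htpos.le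
      _ = K4 * ‖k‖ * (‖x - x'‖ + ‖y - y'‖) := by
          rw [htdef, hK4def]; field_simp
  -- the candidate derivative
  set ρ : MatTup d n → ℝ := fun h => ε / (32 * (‖h‖ + 1)) with hρdef
  have hρpos : ∀ h, 0 < ρ h := by
    intro h
    rw [hρdef]
    exact div_pos hε (by nlinarith [norm_nonneg h])
  have hρadm : ∀ h : MatTup d n, ρ h * ‖h‖ ≤ ε/32 := by
    intro h
    rw [hρdef]
    simp only
    rw [div_mul_eq_mul_div,
      div_le_div_iff₀ (by nlinarith [norm_nonneg h] : (0:ℝ) < 32 * (‖h‖ + 1))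
      (by norm_num : (0:ℝ) < 32)]
    nlinarith [norm_nonneg h]
  set L0 : MatTup d n → Mat n := fun h => ((ρ h : ℂ))⁻¹ • F a a ((ρ h : ℂ) • h) with hL0def
  -- scaling independence
  have hmono : ∀ (h : MatTup d n) (r s : ℝ), 0 < r → r * ‖h‖ ≤ ε/32 → 0 < s → s ≤ r →
      (r : ℂ)⁻¹ • F a a ((r : ℂ) • h) = (s : ℂ)⁻¹ • F a a ((s : ℂ) • h) := by
    intro h r s hr hradm hs hsr
    have hrne : (r : ℝ) ≠ 0 := ne_of_gt hr
    have hsne : (s : ℝ) ≠ 0 := ne_of_gt hs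
    have hth : ((s/r : ℝ) : ℂ) • ((r : ℂ) • h) = (s : ℂ) • h := by
      rw [smul_smul, ← Complex.ofReal_mul, div_mul_cancel₀ _ hrne]
    have hcond : ‖a - a‖ + ‖a - a‖ + ‖(r : ℂ) • h‖ ≤ ε/4 := by
      rw [sub_self, norm_zero, AuxNC.norm_real_smul r hr.le]
      linarith
    have hsc : F a a ((s : ℂ) • h) = ((s/r : ℝ) : ℂ) • F a a ((r : ℂ) • h) := by
      rw [← hth]
      refine hP2 a a _ hcond _ ?_
      rw [Complex.norm_real, Real.norm_eq_abs, abs_of_pos (div_pos hs hr)]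
      rw [div_le_one hr]; exact hsr
    rw [hsc, smul_smul]
    congr 1
    have hrC : (r:ℂ) ≠ 0 := Complex.ofReal_ne_zero.mpr hrne
    have hsC : (s:ℂ) ≠ 0 := Complex.ofReal_ne_zero.mpr hsne
    rw [Complex.ofReal_div]
    field_simp
  have hVal : ∀ (h : MatTup d n) (r : ℝ), 0 < r → r * ‖h‖ ≤ ε/32 →
      L0 h = (r : ℂ)⁻¹ • F a a ((r : ℂ) • h) := by
    intro h r hr hradm
    rcases le_total r (ρ h) with hc | hc
    · rw [hL0def]
      simp only
      exact hmono h (ρ h) r (hρpos h) (hρadm h) hr hc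
    · rw [hL0def]
      simp only
      exact (hmono h r (ρ h) hr hradm (hρpos h) hc).symm
  have hinv_norm : ∀ (r : ℝ), 0 < r → ∀ X : Mat n, ‖(r : ℂ)⁻¹ • X‖ = r⁻¹ * ‖X‖ := by
    intro r hr X
    rw [← Complex.ofReal_inv]
    exact AuxNC.norm_real_smul r⁻¹ (by positivity) X
  -- additivity of L0
  have hAdd : ∀ h k : MatTup d n, L0 (h + k) = L0 h + L0 k := by
    intro h k
    set S : ℝ := ‖h‖ + ‖k‖ + 1 with hSdef
    have hS1 : 1 ≤ S := by
      rw [hSdef]; nlinarith [norm_nonneg h, norm_nonneg k]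
    have hS0 : 0 < S := by linarith
    have key : ∀ r : ℝ, 0 < r → r * S ≤ ε/64 →
        ‖L0 (h + k) - L0 h - L0 k‖ ≤ (4 * K4 * S^2) * r := by
      intro r hr hrS
      have hrh : r * ‖h‖ ≤ ε/64 := by
        refine le_trans ?_ hrS
        refine mul_le_mul_of_nonneg_left ?_ hr.le
        rw [hSdef]; nlinarith [norm_nonneg k]
      have hrk : r * ‖k‖ ≤ ε/64 := by
        refine le_trans ?_ hrS
        refine mul_le_mul_of_nonneg_left ?_ hr.le
        rw [hSdef]; nlinarith [norm_nonneg h]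
      have hrhk : r * ‖h + k‖ ≤ ε/32 := by
        have h1 := norm_add_le h k
        have h2 : r * ‖h + k‖ ≤ r * (‖h‖ + ‖k‖) := mul_le_mul_of_nonneg_left h1 hr.le
        rw [mul_add] at h2
        linarith
      set u : MatTup d n := (r : ℂ) • h with hudef
      set w : MatTup d n := (r : ℂ) • k with hwdef
      have hun : ‖u‖ = r * ‖h‖ := AuxNC.norm_real_smul r hr.le h
      have hwn : ‖w‖ = r * ‖k‖ := AuxNC.norm_real_smul r hr.le k
      have huw : (r : ℂ) • (h + k) = u + w := by rw [hudef, hwdef, smul_add]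
      set q : ℝ := r * S with hqdef
      have hq0 : 0 < q := mul_pos hr hS0
      have hq32 : q ≤ ε/64 := hrS
      have huq : ‖u‖ ≤ q := by
        rw [hun, hqdef, hSdef]
        nlinarith [norm_nonneg k]
      have hwq : ‖w‖ ≤ q := by
        rw [hwn, hqdef, hSdef]
        nlinarith [norm_nonneg h]
      have huwq : ‖u + w‖ ≤ q := by
        refine le_trans (norm_add_le u w) ?_
        rw [hun, hwn, hqdef, hSdef]
        nlinarith
      -- difference identities
      have r1 : (a + u + w) - a = u + w := by abel
      have r2 : (a + u + w) - (a + u) = w := by abel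
      have r3 : (a + u) - a = u := by abel
      have c1 : ‖(a + u + w) - a‖ ≤ ε/16 := by rw [r1]; linarith
      have c2 : ‖(a + u) - a‖ ≤ ε/16 := by rw [r3]; linarith
      have caa : ‖a - a‖ ≤ ε/16 := by rw [sub_self, norm_zero]; linarith
      have e1 := hP1 (a + u + w) a c1 caa
      have e2 := hP1 (a + u + w) (a + u) c1 c2
      have e3 := hP1 (a + u) a c2 caa
      rw [r1] at e1; rw [r2] at e2; rw [r3] at e3
      have esum : F (a + u + w) a (u + w) = F (a + u + w) (a + u) w + F (a + u) a u := by
        rw [e1, e2, e3]; abel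
      -- P4 approximations
      have n0 : ‖a - a‖ ≤ ε/32 := by rw [sub_self, norm_zero]; linarith
      have n1 : ‖(a + u + w) - a‖ ≤ ε/32 := by rw [r1]; linarith
      have n2 : ‖(a + u) - a‖ ≤ ε/32 := by rw [r3]; linarith
      have m1 : ‖a - (a + u + w)‖ = ‖u + w‖ := by rw [norm_sub_rev, r1]
      have m2 : ‖a - (a + u)‖ = ‖u‖ := by rw [norm_sub_rev, r3]
      have d1 : ‖F a a (u + w) - F (a + u + w) a (u + w)‖ ≤ K4 * q * q := by
        refine le_trans (hP4 a a (a + u + w) a (u + w) n0 n0 n1 n0 (by linarith)) ?_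
        rw [m1, sub_self, norm_zero, add_zero]
        have hnn : 0 ≤ ‖u + w‖ := norm_nonneg _
        nlinarith [mul_le_mul huwq huwq hnn hq0.le, hK40]
      have d2 : ‖F a a w - F (a + u + w) (a + u) w‖ ≤ 2 * (K4 * q * q) := by
        refine le_trans (hP4 a a (a + u + w) (a + u) w n0 n0 n1 n2 (by linarith)) ?_
        rw [m1, m2]
        have hnn : 0 ≤ ‖w‖ := norm_nonneg _
        have hnn2 : 0 ≤ ‖u + w‖ + ‖u‖ := by
          have := norm_nonneg (u + w); have := norm_nonneg u; linarith
        have hprod : ‖w‖ * (‖u + w‖ + ‖u‖) ≤ q * (q + q) :=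
          mul_le_mul hwq (by linarith) hnn2 hq0.le
        nlinarith [hK40]
      have d3 : ‖F a a u - F (a + u) a u‖ ≤ K4 * q * q := by
        refine le_trans (hP4 a a (a + u) a u n0 n0 n2 n0 (by linarith)) ?_
        rw [m2, sub_self, norm_zero, add_zero]
        have hnn : 0 ≤ ‖u‖ := norm_nonneg _
        nlinarith [mul_le_mul huq huq hnn hq0.le, hK40]
      have hsplit : F a a (u + w) - F a a u - F a a w =
          (F a a (u + w) - F (a + u + w) a (u + w)) - (F a a u - F (a + u) a u)
            - (F a a w - F (a + u + w) (a + u) w) := by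
        rw [esum]; abel
      have hXbound : ‖F a a (u + w) - F a a u - F a a w‖ ≤ 4 * (K4 * q * q) := by
        rw [hsplit]
        calc ‖(F a a (u + w) - F (a + u + w) a (u + w)) - (F a a u - F (a + u) a u)
              - (F a a w - F (a + u + w) (a + u) w)‖
            ≤ ‖(F a a (u + w) - F (a + u + w) a (u + w)) -
              (F a a u - F (a + u) a u)‖ + ‖F a a w - F (a + u + w) (a + u) w‖ :=
              norm_sub_le _ _
          _ ≤ ‖F a a (u + w) - F (a + u + w) a (u + w)‖ + ‖F a a u - F (a + u) a u‖
              + ‖F a a w - F (a + u + w) (a + u) w‖ := by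
              have := norm_sub_le (F a a (u + w) - F (a + u + w) a (u + w))
                (F a a u - F (a + u) a u)
              linarith
          _ ≤ 4 * (K4 * q * q) := by linarith
      -- express L0 combination
      have v1 := hVal (h + k) r hr hrhk
      have v2 := hVal h r hr (by linarith)
      have v3 := hVal k r hr (by linarith)
      rw [v1, v2, v3, huw, ← smul_sub, ← smul_sub, hinv_norm r hr]
      calc r⁻¹ * ‖F a a (u + w) - F a a u - F a a w‖ ≤ r⁻¹ * (4 * (K4 * q * q)) :=
            mul_le_mul_of_nonneg_left hXbound (inv_nonneg.mpr hr.le)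
        _ = (4 * K4 * S^2) * r := by
            rw [hqdef]
            field_simp
    -- conclude that the defect is zero
    have hzero : L0 (h + k) - L0 h - L0 k = 0 := by
      rw [← norm_le_zero_iff]
      refine le_of_forall_pos_le_add ?_
      intro η hη
      set M : ℝ := 4 * K4 * S^2 with hMdef
      have hM0 : 0 ≤ M := by
        rw [hMdef]
        exact mul_nonneg (by nlinarith) (sq_nonneg S)
      set r : ℝ := min (ε/(64*S)) (η/(M+1)) with hrdef
      have hr0 : 0 < r := by
        apply lt_min
        · exact div_pos hε (by nlinarith)
        · exact div_pos hη (by nlinarith)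
      have hr1 : r * S ≤ ε/64 := by
        have : r ≤ ε/(64*S) := min_le_left _ _
        calc r * S ≤ (ε/(64*S)) * S := mul_le_mul_of_nonneg_right this hS0.le
          _ = ε/64 := by field_simp
      have hr2 : r ≤ η/(M+1) := min_le_right _ _
      have := key r hr0 hr1
      have hb : M * r ≤ η := by
        calc M * r ≤ M * (η/(M+1)) := mul_le_mul_of_nonneg_left hr2 hM0
          _ ≤ η := by
            have h1 : (0:ℝ) < M + 1 := by linarith
            rw [mul_div_assoc', div_le_iff₀ h1]
            nlinarith
      linarith
    rw [sub_sub] at hzero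
    exact sub_eq_zero.mp hzero
  -- homogeneity of L0
  have hL0zero : L0 0 = 0 := by
    rw [hL0def]
    simp only [smul_zero]
    rw [hFzero a a (by rw [sub_self, norm_zero]; linarith)
      (by rw [sub_self, norm_zero]; linarith), smul_zero]
  have hSmul : ∀ (c : ℂ) (h : MatTup d n), L0 (c • h) = c • L0 h := by
    intro c h
    by_cases hc : c = 0
    · subst hc
      rw [zero_smul, zero_smul, hL0zero]
    set r : ℝ := ε / (32 * ((‖c‖ + 1) * (‖h‖ + 1))) with hrdef
    have hr0 : 0 < r := by
      rw [hrdef]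
      exact div_pos hε (by nlinarith [norm_nonneg c, norm_nonneg h])
    have hrρ : r ≤ ρ h := by
      rw [hrdef, hρdef]
      refine div_le_div_of_nonneg_left hε.le (by nlinarith [norm_nonneg h]) ?_
      nlinarith [norm_nonneg c, norm_nonneg h]
    have hrρc : r ≤ ρ (c • h) := by
      rw [hrdef, hρdef]
      refine div_le_div_of_nonneg_left hε.le (by nlinarith [norm_nonneg (c • h)]) ?_
      rw [norm_smul]
      nlinarith [norm_nonneg c, norm_nonneg h]
    have hrh : r * ‖h‖ ≤ ε/32 :=
      le_trans (mul_le_mul_of_nonneg_right hrρ (norm_nonneg h)) (hρadm h)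
    have hrch : r * ‖c • h‖ ≤ ε/32 :=
      le_trans (mul_le_mul_of_nonneg_right hrρc (norm_nonneg _)) (hρadm (c • h))
    have hsw : (r : ℂ) • (c • h) = c • ((r : ℂ) • h) := smul_comm _ _ _
    have hcondr : ‖a - a‖ + ‖a - a‖ + ‖(r : ℂ) • h‖ ≤ ε/4 := by
      rw [sub_self, norm_zero, AuxNC.norm_real_smul r hr0.le]
      linarith
    have hcondcr : ‖a - a‖ + ‖a - a‖ + ‖c • ((r : ℂ) • h)‖ ≤ ε/4 := by
      rw [sub_self, norm_zero, norm_smul, AuxNC.norm_real_smul r hr0.le]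
      have : ‖c‖ * (r * ‖h‖) = r * ‖c • h‖ := by
        rw [norm_smul]; ring
      rw [this]
      linarith
    have claim : F a a (c • ((r : ℂ) • h)) = c • F a a ((r : ℂ) • h) := by
      rcases le_or_gt ‖c‖ 1 with hc1 | hc1
      · exact hP2 a a _ hcondr c hc1
      · have hinv : ‖c⁻¹‖ ≤ 1 := by
          rw [norm_inv]
          rw [inv_le_one_iff₀]
          right
          exact hc1.le
        have hthis := hP2 a a (c • ((r : ℂ) • h)) hcondcr c⁻¹ hinv
        rw [inv_smul_smul₀ hc] at hthis
        calc F a a (c • ((r : ℂ) • h))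
            = (c * c⁻¹) • F a a (c • ((r : ℂ) • h)) := by
              rw [mul_inv_cancel₀ hc, one_smul]
          _ = c • (c⁻¹ • F a a (c • ((r : ℂ) • h))) := (smul_smul c c⁻¹ _).symm
          _ = c • F a a ((r : ℂ) • h) := by rw [← hthis]
    rw [hVal (c • h) r hr0 hrch, hVal h r hr0 hrh, hsw, claim]
    exact smul_comm _ _ _
  -- bound for L0
  have hBd : ∀ h : MatTup d n, ‖L0 h‖ ≤ K * ‖h‖ := by
    intro h
    rw [hVal h (ρ h) (hρpos h) (hρadm h), hinv_norm _ (hρpos h)]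
    have h0 : F a a (0 : MatTup d n) = 0 :=
      hFzero a a (by rw [sub_self, norm_zero]; linarith)
        (by rw [sub_self, norm_zero]; linarith)
    have hd : ‖a - a‖ + ‖a - a‖ + ‖(ρ h : ℂ) • h‖ ≤ ε/4 := by
      rw [sub_self, norm_zero, AuxNC.norm_real_smul _ (hρpos h).le]
      have := hρadm h
      linarith
    have hd0 : ‖a - a‖ + ‖a - a‖ + ‖(0 : MatTup d n)‖ ≤ ε/4 := by
      simp only [sub_self, norm_zero]; linarith
    have hest := hP3 a a ((ρ h : ℂ) • h) a a 0 hd hd0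
    rw [sub_self, norm_zero, sub_zero, AuxNC.norm_real_smul _ (hρpos h).le] at hest
    have hFh : ‖F a a ((ρ h : ℂ) • h)‖ ≤ K * (ρ h * ‖h‖) := by
      have : F a a ((ρ h : ℂ) • h) - F a a 0 = F a a ((ρ h : ℂ) • h) := by
        rw [h0, sub_zero]
      rw [this] at hest
      calc ‖F a a ((ρ h : ℂ) • h)‖ ≤ K * (0 + 0 + ρ h * ‖h‖) := hest
        _ = K * (ρ h * ‖h‖) := by ring_nf
    calc (ρ h)⁻¹ * ‖F a a ((ρ h : ℂ) • h)‖ ≤ (ρ h)⁻¹ * (K * (ρ h * ‖h‖)) :=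
          mul_le_mul_of_nonneg_left hFh (inv_nonneg.mpr (hρpos h).le)
      _ = K * ‖h‖ := by
          rw [mul_left_comm K, ← mul_assoc, inv_mul_cancel₀ (hρpos h).ne', one_mul]
  -- the bundled derivative
  set Llin : MatTup d n →ₗ[ℂ] Mat n :=
    { toFun := L0, map_add' := hAdd, map_smul' := hSmul } with hLlin
  set L : MatTup d n →L[ℂ] Mat n := LinearMap.mkContinuous Llin K hBd with hLdef
  have hLapp : ∀ h, L h = L0 h := fun h => rfl
  -- f n has derivative L at a
  have hquad : ∀ h : MatTup d n, ‖h‖ ≤ ε/64 →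
      ‖f n (a + h) - f n a - L h‖ ≤ K4 * ‖h‖ * ‖h‖ := by
    intro h hh
    have hLh : L h = F a a h := by
      rw [hLapp, hVal h 1 one_pos (by rw [one_mul]; linarith)]
      norm_num
    have hfd : f n (a + h) - f n a = F (a + h) a h := by
      have r3 : (a + h) - a = h := by abel
      have := hP1 (a + h) a (by rw [r3]; linarith)
        (by rw [sub_self, norm_zero]; linarith)
      rw [r3] at this
      rw [this]
    rw [hLh, hfd]
    have := hP4 (a + h) a a a h (by rw [show (a+h)-a = h by abel]; linarith)
      (by rw [sub_self, norm_zero]; linarith)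
      (by rw [sub_self, norm_zero]; linarith)
      (by rw [sub_self, norm_zero]; linarith) (by linarith)
    rw [sub_self, norm_zero, add_zero, show (a+h)-a = h by abel] at this
    exact this
  have hDeriv : HasFDerivAt (f n) L a := by
    rw [hasFDerivAt_iff_isLittleO_nhds_zero]
    rw [Asymptotics.isLittleO_iff]
    intro c hc
    rw [Metric.eventually_nhds_iff]
    refine ⟨min (ε/64) (c/(K4+1)), lt_min (by linarith) (div_pos hc (by linarith)), ?_⟩
    intro h hdist
    rw [dist_zero_right] at hdist
    have h1 : ‖h‖ ≤ ε/64 := le_of_lt (lt_of_lt_of_le hdist (min_le_left _ _))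
    have h2 : ‖h‖ ≤ c/(K4+1) := le_of_lt (lt_of_lt_of_le hdist (min_le_right _ _))
    refine le_trans (hquad h h1) ?_
    have h3 : K4 * ‖h‖ ≤ c := by
      have hK41 : (0:ℝ) < K4 + 1 := by linarith
      calc K4 * ‖h‖ ≤ K4 * (c/(K4+1)) := mul_le_mul_of_nonneg_left h2 hK40
        _ ≤ c := by
          rw [mul_div_assoc', div_le_iff₀ hK41]
          nlinarith
    exact mul_le_mul_of_nonneg_right h3 (norm_nonneg h)
  -- finish : compute L at the commutator
  rw [hDeriv.fderiv]
  set h0 : MatTup d n := fun r => a r * Γ - Γ * a r with hh0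
  show L h0 = f n a * Γ - Γ * f n a
  set r : ℝ := ρ h0 with hrdef
  have hr0 : 0 < r := hρpos h0
  have hradm : r * ‖h0‖ ≤ ε/32 := hρadm h0
  have hrne : (r : ℂ) ≠ 0 := by
    simp only [ne_eq, Complex.ofReal_eq_zero]
    exact ne_of_gt hr0
  set G : Mat n := (r : ℂ) • Γ with hG
  have hkey : (fun r' => a r' * G - G * a r') = (r : ℂ) • h0 := by
    funext r'
    rw [hG, hh0]
    simp only [Pi.smul_apply]
    rw [Matrix.mul_smul, Matrix.smul_mul, smul_sub]
  have hXm : (⟨n+n, Xp a a ((r : ℂ) • h0)⟩ : MSpace d) ∈ Ω'' := by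
    apply hXmem
    rw [sub_self, norm_zero, AuxNC.norm_real_smul _ hr0.le]
    linarith
  rw [← hkey] at hXm
  have hsim := AuxNC.TR_f_Xp_sim hnc a a G (hsubΩ haΩ'') (hsubΩ haΩ'')
    (hsubΩ ha2m) (hsubΩ hXm)
  rw [hkey] at hsim
  have hval : F a a ((r : ℂ) • h0) = (r : ℂ) • (f n a * Γ - Γ * f n a) := by
    rw [hFdef]
    simp only
    rw [hsim, hG, Matrix.mul_smul, Matrix.smul_mul, smul_sub]
  rw [hLapp, hVal h0 r hr0 hradm, hval, inv_smul_smul₀ hrne]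
end
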